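/- arXiv:2309.06210 — 4 statements merged into one kernel-verified Lean document; each statement's English description precedes it below -/
import Mathlib

section
/- There exists an absolute constant $C > 0$ such that for all integers $n \geq 1$, $d \geq 1$, any integer $c$, and any real $\alpha \in (0,1)$, one has $\Big| \sum_{0 \leq l \leq n,\ l \equiv c \bmod d} \binom{n}{l} \alpha^l (1-\alpha)^{n-l} - \frac{1}{d} \Big| \leq \frac{C}{\sqrt{\alpha(1-\alpha)n}}$. -/
open Finset Real

lemma tele' (K : ℕ) (hK : 1 ≤ K) : ∀ N, K ≤ N →
    ∑ m ∈ Finset.Ico (K+1) (N+1), (1:ℝ) / (m:ℝ)^2 ≤ 1 / K - 1 / N := by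
  intro N
  induction N with
  | zero => omega
  | succ N ih =>
    intro hKN
    rcases le_or_gt (K+1) (N+1) with h2 | h2
    · rw [Finset.sum_Ico_succ_top (by omega)]
      have hN1 : (1:ℝ) ≤ N := by exact_mod_cast (by omega : 1 ≤ N)
      have ihh := ih (by omega)
      have key : (1:ℝ)/((N:ℝ)+1)^2 ≤ 1/N - 1/(N+1) := by
        rw [div_sub_div _ _ (by positivity) (by positivity),
          div_le_div_iff₀ (by positivity) (by positivity)]
        nlinarith
      push_cast
      push_cast at ihh
      linarith
    · have : N + 1 = K := by omega
      subst this
      rw [Finset.Ico_eq_empty (by omega)]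
      simp
  
lemma tele (K : ℕ) (hK : 1 ≤ K) (M : ℕ) :
    ∑ m ∈ Finset.Ico (K+1) M, (1:ℝ) / (m:ℝ)^2 ≤ 1 / K := by
  rcases le_or_gt M (K+1) with h | h
  · rw [Finset.Ico_eq_empty (by omega)]; simp
  · obtain ⟨N, rfl⟩ : ∃ N, M = N + 1 := ⟨M - 1, by omega⟩
    have h1 := tele' K hK N (by omega)
    have hN : (0:ℝ) < N := by exact_mod_cast (by omega : 0 < N)
    have : (0:ℝ) ≤ 1/(N:ℝ) := by positivity
    linarith

lemma sumexp {γ : ℝ} (hγ : 0 < γ) (M : ℕ) :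
    ∑ m ∈ Finset.Ico 1 M, Real.exp (-(γ * (m:ℝ)^2)) ≤ 3 / Real.sqrt γ := by
  have hsg : 0 < Real.sqrt γ := Real.sqrt_pos.2 hγ
  rcases le_or_gt 1 γ with hγ1 | hγ1
  · -- geometric: exp(-γ m²) ≤ exp(-γ)^m
    set r := Real.exp (-γ) with hrdef
    have hr : r < 1 := Real.exp_lt_one_iff.2 (by linarith)
    have hr0 : 0 < r := Real.exp_pos _
    have h1 : ∑ m ∈ Finset.Ico 1 M, Real.exp (-(γ * (m:ℝ)^2)) ≤
        ∑ m ∈ Finset.Ico 1 M, r ^ m := by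
      apply Finset.sum_le_sum
      intro m hm
      rw [hrdef, ← Real.exp_nat_mul]
      apply Real.exp_le_exp.2
      have hm1 : 1 ≤ m := (Finset.mem_Ico.1 hm).1
      have h7 : (1:ℝ) ≤ (m:ℝ) := Nat.one_le_cast.mpr hm1
      have h8 : (m:ℝ) ≤ (m:ℝ)^2 := by nlinarith
      nlinarith [mul_le_mul_of_nonneg_left h8 hγ.le]
    have h2 : ∑ m ∈ Finset.Ico 1 M, r ^ m ≤ r / (1 - r) := by
      rcases le_or_gt M 1 with hM | hM
      · rw [Finset.Ico_eq_empty (by omega)]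
        simp only [Finset.sum_empty]
        exact div_nonneg hr0.le (by linarith)
      calc ∑ m ∈ Finset.Ico 1 M, r ^ m = r * ∑ m ∈ Finset.range (M-1), r ^ m := by
            rw [Finset.mul_sum, Finset.sum_Ico_eq_sum_range]
            apply Finset.sum_congr rfl
            intro i _
            rw [← pow_succ']
            congr 1
            omega
        _ ≤ r * (1/(1-r)) := by
            apply mul_le_mul_of_nonneg_left _ hr0.le
            rw [geom_sum_eq (by linarith)]
            have heq : (r^(M-1) - 1)/(r - 1) = (1 - r^(M-1))/(1 - r) := by
              rw [← neg_div_neg_eq]; ring_nf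
            rw [heq, div_le_div_iff₀ (by linarith) (by linarith)]
            have : 0 ≤ r ^ (M-1) := by positivity
            nlinarith
        _ = r / (1-r) := by ring
    have h3 : r / (1 - r) ≤ 1/γ := by
      rw [div_le_div_iff₀ (by linarith) hγ]
      have he := Real.add_one_le_exp γ
      have : Real.exp γ * r = 1 := by rw [hrdef, ← Real.exp_add]; simp
      nlinarith [Real.exp_pos γ]
    have h4 : (1:ℝ)/γ ≤ 3/Real.sqrt γ := by
      rw [div_le_div_iff₀ hγ hsg]
      have h5 : Real.sqrt γ ≤ γ := by
        have h6 := Real.sqrt_le_sqrt (show γ ≤ γ^2 by nlinarith)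
        rwa [Real.sqrt_sq hγ.le] at h6
      nlinarith
    linarith
  · set K := ⌈1/Real.sqrt γ⌉₊ with hKdef
    have hsg1 : Real.sqrt γ < 1 := by
      rw [show (1:ℝ) = Real.sqrt 1 by simp]
      exact Real.sqrt_lt_sqrt hγ.le hγ1
    have hK1 : (1:ℝ) ≤ 1/Real.sqrt γ := by rw [le_div_iff₀ hsg]; linarith
    have hKge : 1/Real.sqrt γ ≤ (K:ℝ) := Nat.le_ceil _
    have hKle : (K:ℝ) ≤ 2/Real.sqrt γ := by
      have := Nat.ceil_lt_add_one (by positivity : (0:ℝ) ≤ 1/Real.sqrt γ)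
      have h2 : (K:ℝ) < 1/Real.sqrt γ + 1 := this
      have h3 : (2:ℝ)/Real.sqrt γ = 1/Real.sqrt γ + 1/Real.sqrt γ := by ring
      linarith
    have hK1n : 1 ≤ K := Nat.one_le_cast.mp (le_trans (by linarith) hKge)
    set M' := max M (K+1) with hM'def
    have hsub : ∑ m ∈ Finset.Ico 1 M, Real.exp (-(γ * (m:ℝ)^2)) ≤
        ∑ m ∈ Finset.Ico 1 M', Real.exp (-(γ * (m:ℝ)^2)) := by
      apply Finset.sum_le_sum_of_subset_of_nonneg
      · apply Finset.Ico_subset_Ico le_rfl (le_max_left _ _)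
      · intros; positivity
    have hsplit : ∑ m ∈ Finset.Ico 1 M', Real.exp (-(γ * (m:ℝ)^2)) =
        ∑ m ∈ Finset.Ico 1 (K+1), Real.exp (-(γ * (m:ℝ)^2)) +
        ∑ m ∈ Finset.Ico (K+1) M', Real.exp (-(γ * (m:ℝ)^2)) := by
      rw [Finset.sum_Ico_consecutive _ (by omega) (le_max_right _ _)]
    have hA : ∑ m ∈ Finset.Ico 1 (K+1), Real.exp (-(γ * (m:ℝ)^2)) ≤ K := by
      calc ∑ m ∈ Finset.Ico 1 (K+1), Real.exp (-(γ * (m:ℝ)^2)) ≤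
            ∑ _m ∈ Finset.Ico 1 (K+1), (1:ℝ) := by
            apply Finset.sum_le_sum
            intro m _
            rw [show (1:ℝ) = Real.exp 0 by simp]
            apply Real.exp_le_exp.2
            have : (0:ℝ) ≤ γ * (m:ℝ)^2 := by positivity
            linarith
        _ = K := by simp
    have hB : ∑ m ∈ Finset.Ico (K+1) M', Real.exp (-(γ * (m:ℝ)^2)) ≤ 1/γ * (1/K) := by
      calc ∑ m ∈ Finset.Ico (K+1) M', Real.exp (-(γ * (m:ℝ)^2)) ≤
            ∑ m ∈ Finset.Ico (K+1) M', 1/γ * (1/(m:ℝ)^2) := by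
            apply Finset.sum_le_sum
            intro m hm
            have hm1 : 1 ≤ m := by have := (Finset.mem_Ico.1 hm).1; omega
            have hmr : (1:ℝ) ≤ (m:ℝ) := Nat.one_le_cast.mpr hm1
            have hx : 0 < γ * (m:ℝ)^2 := by positivity
            have hle := Real.add_one_le_exp (γ * (m:ℝ)^2)
            calc Real.exp (-(γ * (m:ℝ)^2)) = (Real.exp (γ * (m:ℝ)^2))⁻¹ := Real.exp_neg _
              _ ≤ (γ * (m:ℝ)^2)⁻¹ := by
                  apply inv_anti₀ hx
                  linarith
              _ = 1/γ * (1/(m:ℝ)^2) := by rw [mul_inv, one_div, one_div]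
        _ = 1/γ * ∑ m ∈ Finset.Ico (K+1) M', (1:ℝ)/(m:ℝ)^2 := by rw [Finset.mul_sum]
        _ ≤ 1/γ * (1/K) := by
            apply mul_le_mul_of_nonneg_left (tele K hK1n M') (by positivity)
    have hC : (1:ℝ)/γ * (1/K) ≤ 1/Real.sqrt γ := by
      have hKpos : (0:ℝ) < K := by exact_mod_cast hK1n
      have hgs : Real.sqrt γ * Real.sqrt γ = γ := Real.mul_self_sqrt hγ.le
      have h1K : 1/(K:ℝ) ≤ Real.sqrt γ := by
        rw [div_le_iff₀ hKpos]
        rw [div_le_iff₀ hsg] at hKge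
        linarith
      have heq : Real.sqrt γ / γ = 1/Real.sqrt γ := by
        rw [← hgs]; field_simp; rw [Real.sqrt_sq (Real.sqrt_nonneg _)]
      calc (1:ℝ)/γ * (1/K) ≤ 1/γ * Real.sqrt γ := by
            apply mul_le_mul_of_nonneg_left h1K (by positivity)
        _ = Real.sqrt γ / γ := by ring
        _ = 1/Real.sqrt γ := heq
    have hfin : (K:ℝ) + 1/γ * (1/K) ≤ 3/Real.sqrt γ := by
      have : (3:ℝ)/Real.sqrt γ = 2/Real.sqrt γ + 1/Real.sqrt γ := by ring
      rw [this]
      exact add_le_add hKle hC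
    linarith

open Complex in
lemma rou (d : ℕ) (hd : 1 ≤ d) (k : ℤ) :
    ∑ j ∈ Finset.range d, Complex.exp (2 * Real.pi * Complex.I * k * j / d) =
      if (d:ℤ) ∣ k then (d:ℂ) else 0 := by
  have hd0 : (d:ℂ) ≠ 0 := Nat.cast_ne_zero.2 (by omega)
  set ζ : ℂ := Complex.exp (2 * Real.pi * Complex.I * k / d) with hζ
  have hterm : ∀ j : ℕ, Complex.exp (2 * Real.pi * Complex.I * k * j / d) = ζ ^ j := by
    intro j
    rw [hζ, ← Complex.exp_nat_mul]
    ring_nf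
  rw [Finset.sum_congr rfl (fun j _ => hterm j)]
  by_cases h : (d:ℤ) ∣ k
  · obtain ⟨m, rfl⟩ := h
    have : ζ = 1 := by
      rw [hζ, Complex.exp_eq_one_iff]
      refine ⟨m, ?_⟩
      push_cast
      field_simp
    have hdvd : (d:ℤ) ∣ (d:ℤ)*m := dvd_mul_right _ _
    simp [this, hdvd]
  · rw [if_neg h]
    have hζd : ζ ^ d = 1 := by
      rw [hζ, ← Complex.exp_nat_mul, Complex.exp_eq_one_iff]
      refine ⟨k, ?_⟩
      field_simp
    have hζ1 : ζ ≠ 1 := by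
      intro hcon
      rw [hζ, Complex.exp_eq_one_iff] at hcon
      obtain ⟨m, hm⟩ := hcon
      apply h
      refine ⟨m, ?_⟩
      have hpi : (Real.pi:ℂ) ≠ 0 := by
        exact_mod_cast Real.pi_ne_zero
      have hIm : (2:ℂ) * Real.pi * Complex.I ≠ 0 := by
        simp [Complex.I_ne_zero, hpi]
      field_simp at hm
      have hk : (k:ℂ) = (d:ℂ) * m := by
        have h2 : (2:ℂ) * Real.pi * Complex.I * k = (2:ℂ) * Real.pi * Complex.I * (d * m) := by
          rw [hm]
        exact mul_left_cancel₀ hIm h2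
      exact_mod_cast hk
    simp [geom_sum_eq hζ1, hζd]

lemma myFourier (n d : ℕ) (hd : 1 ≤ d) (c : ℤ) (α : ℝ) :
    ∑ j ∈ Finset.range d, (Complex.exp (2*Real.pi*Complex.I*(-c)*j/d) *
      ((α:ℂ) * Complex.exp (2*Real.pi*Complex.I*j/d) + (1-α:ℂ))^n)
    = (d:ℂ) * ((∑ l ∈ (Finset.range (n+1)).filter (fun l : ℕ => ((l:ℤ)) % d = c % d),
        (n.choose l : ℝ) * α ^ l * (1-α)^(n-l) : ℝ)) := by
  have hd0 : (d:ℂ) ≠ 0 := Nat.cast_ne_zero.2 (by omega)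
  calc ∑ j ∈ Finset.range d, (Complex.exp (2*Real.pi*Complex.I*(-c)*j/d) *
        ((α:ℂ) * Complex.exp (2*Real.pi*Complex.I*j/d) + (1-α:ℂ))^n)
      = ∑ j ∈ Finset.range d, ∑ l ∈ Finset.range (n+1),
          ((n.choose l : ℂ) * (α:ℂ)^l * (1-α:ℂ)^(n-l)) *
            Complex.exp (2*Real.pi*Complex.I*((l:ℤ)-c)*j/d) := by
        apply Finset.sum_congr rfl
        intro j _
        rw [add_pow, Finset.mul_sum]
        apply Finset.sum_congr rfl
        intro l _
        rw [mul_pow, ← Complex.exp_nat_mul]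
        rw [show Complex.exp (2*Real.pi*Complex.I*(-c)*j/d) *
            ((α:ℂ)^l * Complex.exp ((l:ℕ) * (2*Real.pi*Complex.I*j/d)) * (1-α:ℂ)^(n-l) * (n.choose l : ℂ))
          = ((n.choose l : ℂ) * (α:ℂ)^l * (1-α:ℂ)^(n-l)) *
            (Complex.exp (2*Real.pi*Complex.I*(-c)*j/d) * Complex.exp ((l:ℕ) * (2*Real.pi*Complex.I*j/d))) by ring]
        rw [← Complex.exp_add]
        congr 2
        field_simp
        push_cast
        ring
    _ = ∑ l ∈ Finset.range (n+1), ((n.choose l : ℂ) * (α:ℂ)^l * (1-α:ℂ)^(n-l)) *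
          ∑ j ∈ Finset.range d, Complex.exp (2*Real.pi*Complex.I*((l:ℤ)-c)*j/d) := by
        rw [Finset.sum_comm]
        apply Finset.sum_congr rfl
        intro l _
        rw [Finset.mul_sum]
    _ = ∑ l ∈ Finset.range (n+1), ((n.choose l : ℂ) * (α:ℂ)^l * (1-α:ℂ)^(n-l)) *
          (if (d:ℤ) ∣ ((l:ℤ) - c) then (d:ℂ) else 0) := by
        apply Finset.sum_congr rfl
        intro l _
        have hr := rou d hd ((l:ℤ) - c)
        push_cast at hr ⊢
        rw [hr]
    _ = (d:ℂ) * ((∑ l ∈ (Finset.range (n+1)).filter (fun l : ℕ => ((l:ℤ)) % d = c % d),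
        (n.choose l : ℝ) * α ^ l * (1-α)^(n-l) : ℝ)) := by
        push_cast
        rw [Finset.mul_sum, Finset.sum_filter]
        apply Finset.sum_congr rfl
        intro l _
        have hiff : ((l:ℤ) % d = c % d) ↔ (d:ℤ) ∣ ((l:ℤ) - c) := by
          rw [← Int.modEq_iff_dvd]
          exact ⟨fun h => h.symm, fun h => h.symm⟩
        by_cases h : (l:ℤ) % d = c % d
        · rw [if_pos h, if_pos (hiff.1 h)]; ring
        · rw [if_neg h, if_neg (fun hc => h (hiff.2 hc))]; ring

lemma absPhi (α θ : ℝ) (h0 : 0 ≤ α) (h1 : α ≤ 1) :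
    ‖(α:ℂ) * Complex.exp (θ * Complex.I) + (1-α:ℂ)‖ ≤
      Real.exp (-(α*(1-α)*(1-Real.cos θ))) := by
  have hφ : (α:ℂ) * Complex.exp ((θ:ℂ) * Complex.I) + (1-α:ℂ) =
      Complex.ofReal (α*Real.cos θ + (1-α)) + Complex.ofReal (α*Real.sin θ) * Complex.I := by
    rw [Complex.exp_mul_I, ← Complex.ofReal_cos, ← Complex.ofReal_sin]
    push_cast
    ring
  rw [hφ, Complex.norm_add_mul_I]
  have hsc := Real.sin_sq_add_cos_sq θ
  set X := 2*α*(1-α)*(1-Real.cos θ) with hX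
  have hx : (α*Real.cos θ + (1-α))^2 + (α*Real.sin θ)^2 = 1 - X := by
    rw [hX]; linear_combination α^2 * hsc
  rw [hx]
  calc Real.sqrt (1 - X) ≤ Real.sqrt (Real.exp (-X)) := by
        apply Real.sqrt_le_sqrt
        have := Real.add_one_le_exp (-X)
        linarith
    _ = Real.exp (-(α*(1-α)*(1-Real.cos θ))) := by
        rw [show -X = -(α*(1-α)*(1-Real.cos θ)) + -(α*(1-α)*(1-Real.cos θ)) by rw [hX]; ring,
          Real.exp_add, Real.sqrt_mul_self (Real.exp_pos _).le]

lemma cosbound (d j : ℕ) (t : ℝ) (ht : 0 ≤ t) (h1 : 1 ≤ j) (h2 : j < d) :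
    Real.exp (-(t * (1 - Real.cos (2*Real.pi*j/d)))) ≤
      Real.exp (-(8*t/(d:ℝ)^2 * (j:ℝ)^2)) + Real.exp (-(8*t/(d:ℝ)^2 * ((d:ℝ)-(j:ℝ))^2)) := by
  have hd0 : (0:ℝ) < d := by exact_mod_cast (by omega : 0 < d)
  have hj0 : (0:ℝ) < j := by exact_mod_cast h1
  have hjd : (j:ℝ) < d := by exact_mod_cast h2
  have hpi := Real.pi_pos
  have hkey : 1 - Real.cos (2*Real.pi*j/d) = 2 * Real.sin (Real.pi*j/d)^2 := by
    have := Real.cos_two_mul' (Real.pi*j/d)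
    have hsc := Real.sin_sq_add_cos_sq (Real.pi*j/d)
    rw [show 2*Real.pi*j/d = 2*(Real.pi*j/d) by ring, this]
    linarith
  rcases le_or_gt (2*j) d with hc | hc
  · -- use j
    have harg : Real.pi*j/d ≤ Real.pi/2 := by
      rw [div_le_div_iff₀ hd0 (by norm_num : (0:ℝ) < 2)]
      have h2j : 2*(j:ℝ) ≤ d := by exact_mod_cast hc
      nlinarith
    have hsin : 2/Real.pi * (Real.pi*j/d) ≤ Real.sin (Real.pi*j/d) :=
      Real.mul_le_sin (by positivity) harg
    have hval : 2/Real.pi * (Real.pi*j/d) = 2*j/d := by field_simp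
    have hge : 8*(j:ℝ)^2/(d:ℝ)^2 ≤ 1 - Real.cos (2*Real.pi*j/d) := by
      rw [hkey]
      have h1 : (2:ℝ)*j/d ≤ Real.sin (Real.pi*j/d) := by rw [← hval]; exact hsin
      rw [div_le_iff₀ (by positivity : (0:ℝ) < (d:ℝ)^2)]
      rw [div_le_iff₀ hd0] at h1
      nlinarith [mul_self_le_mul_self (by positivity : (0:ℝ) ≤ 2*(j:ℝ)) h1]
    have := Real.exp_le_exp.2 (neg_le_neg (mul_le_mul_of_nonneg_left hge ht))
    calc Real.exp (-(t * (1 - Real.cos (2*Real.pi*j/d)))) ≤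
          Real.exp (-(t * (8*(j:ℝ)^2/(d:ℝ)^2))) := this
      _ = Real.exp (-(8*t/(d:ℝ)^2 * (j:ℝ)^2)) := by ring_nf
      _ ≤ _ := le_add_of_nonneg_right (Real.exp_pos _).le
  · -- use d - j
    have hsin_eq : Real.sin (Real.pi*j/d) = Real.sin (Real.pi*((d:ℝ)-j)/d) := by
      rw [← Real.sin_pi_sub]
      congr 1
      field_simp
    have harg : Real.pi*((d:ℝ)-j)/d ≤ Real.pi/2 := by
      rw [div_le_div_iff₀ hd0 (by norm_num : (0:ℝ) < 2)]
      have h2j : (d:ℝ) < 2*j := by exact_mod_cast hc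
      nlinarith
    have hargpos : (0:ℝ) ≤ Real.pi*((d:ℝ)-j)/d := by
      apply div_nonneg _ hd0.le
      nlinarith
    have hsin : 2/Real.pi * (Real.pi*((d:ℝ)-j)/d) ≤ Real.sin (Real.pi*((d:ℝ)-j)/d) :=
      Real.mul_le_sin hargpos harg
    have hval : 2/Real.pi * (Real.pi*((d:ℝ)-j)/d) = 2*((d:ℝ)-j)/d := by field_simp
    have hge : 8*((d:ℝ)-j)^2/(d:ℝ)^2 ≤ 1 - Real.cos (2*Real.pi*j/d) := by
      rw [hkey, hsin_eq]
      have h1 : (2:ℝ)*((d:ℝ)-j)/d ≤ Real.sin (Real.pi*((d:ℝ)-j)/d) := by rw [← hval]; exact hsin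
      rw [div_le_iff₀ (by positivity : (0:ℝ) < (d:ℝ)^2)]
      rw [div_le_iff₀ hd0] at h1
      nlinarith [mul_self_le_mul_self (by nlinarith : (0:ℝ) ≤ 2*((d:ℝ)-(j:ℝ))) h1]
    have := Real.exp_le_exp.2 (neg_le_neg (mul_le_mul_of_nonneg_left hge ht))
    calc Real.exp (-(t * (1 - Real.cos (2*Real.pi*j/d)))) ≤
          Real.exp (-(t * (8*((d:ℝ)-j)^2/(d:ℝ)^2))) := this
      _ = Real.exp (-(8*t/(d:ℝ)^2 * ((d:ℝ)-(j:ℝ))^2)) := by ring_nf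
      _ ≤ _ := le_add_of_nonneg_left (Real.exp_pos _).le

/-- There is an absolute constant `C > 0` such that for all integers `n, d ≥ 1`, any integer `c`,
and any `α ∈ (0,1)`,
`|∑_{0 ≤ l ≤ n, l ≡ c mod d} C(n,l) α^l (1-α)^(n-l) - 1/d| ≤ C / √(α(1-α)n)`. -/
theorem stmt_1 :
    ∃ C : ℝ, 0 < C ∧ ∀ (n d : ℕ) (c : ℤ) (α : ℝ), 1 ≤ n → 1 ≤ d → α ∈ Set.Ioo (0:ℝ) 1 →
      |(∑ l ∈ (Finset.range (n + 1)).filter (fun l : ℕ => ((l : ℤ)) % d = c % d),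
          (n.choose l : ℝ) * α ^ l * (1 - α) ^ (n - l)) - 1 / d| ≤
        C / Real.sqrt (α * (1 - α) * n) := by
  refine ⟨3, by norm_num, ?_⟩
  intro n d c α hn hd hα
  obtain ⟨hα0, hα1⟩ := hα
  set S : ℝ := ∑ l ∈ (Finset.range (n + 1)).filter (fun l : ℕ => ((l : ℤ)) % d = c % d),
      (n.choose l : ℝ) * α ^ l * (1 - α) ^ (n - l) with hS
  have hd0 : (0:ℝ) < d := by exact_mod_cast (by omega : 0 < d)
  have hn0 : (0:ℝ) < n := by exact_mod_cast (by omega : 0 < n)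
  set t : ℝ := α * (1 - α) * n with ht
  have ht0 : 0 < t := by
    rw [ht]
    exact mul_pos (mul_pos hα0 (by linarith)) hn0
  set γ : ℝ := 8 * t / (d:ℝ)^2 with hγ
  have hγ0 : 0 < γ := by rw [hγ]; positivity
  -- Fourier identity
  set f : ℕ → ℂ := fun j => Complex.exp (2*Real.pi*Complex.I*(-c)*j/d) *
      ((α:ℂ) * Complex.exp (2*Real.pi*Complex.I*j/d) + (1-α:ℂ))^n with hf
  have hid : ∑ j ∈ Finset.range d, f j = (d:ℂ) * (S:ℂ) := myFourier n d hd c α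
  have hf0 : f 0 = 1 := by
    rw [hf]
    simp
  have hsplit : ∑ j ∈ Finset.range d, f j = f 0 + ∑ j ∈ Finset.Ico 1 d, f j := by
    rw [Finset.range_eq_Ico, ← Finset.sum_Ico_consecutive _ (by omega : 0 ≤ 1) (by omega : 1 ≤ d)]
    congr 1
    rw [show Finset.Ico 0 1 = {0} from rfl, Finset.sum_singleton]
  have hkey : (d:ℂ) * (S:ℂ) - 1 = ∑ j ∈ Finset.Ico 1 d, f j := by
    rw [← hid, hsplit, hf0]; ring
  -- bound each |f j|
  have hterm : ∀ j ∈ Finset.Ico 1 d, ‖f j‖ ≤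
      Real.exp (-(γ * (j:ℝ)^2)) + Real.exp (-(γ * ((d:ℝ)-(j:ℝ))^2)) := by
    intro j hj
    obtain ⟨hj1, hjd⟩ := Finset.mem_Ico.1 hj
    have e1 : (2*Real.pi*Complex.I*(-c)*j/d : ℂ) = ((2*Real.pi*(-c)*j/d : ℝ) : ℂ) * Complex.I := by
      push_cast; field_simp
    have e2 : (2*Real.pi*Complex.I*j/d : ℂ) = ((2*Real.pi*j/d : ℝ) : ℂ) * Complex.I := by
      push_cast; field_simp
    have habs : ‖f j‖ = ‖((α:ℂ) *
        Complex.exp (((2*Real.pi*j/d : ℝ) : ℂ) * Complex.I) + (1-α:ℂ))^n‖ := by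
      rw [hf]
      simp only [norm_mul, e1, e2, Complex.norm_exp_ofReal_mul_I, one_mul]
    rw [habs, norm_pow]
    calc ‖(α:ℂ) * Complex.exp (((2*Real.pi*j/d : ℝ) : ℂ) * Complex.I) + (1-α:ℂ)‖^n ≤
          Real.exp (-(α*(1-α)*(1-Real.cos (2*Real.pi*j/d))))^n := by
          apply pow_le_pow_left₀ (norm_nonneg _)
          exact absPhi α (2*Real.pi*j/d) hα0.le hα1.le
      _ = Real.exp (-(t * (1-Real.cos (2*Real.pi*j/d)))) := by
          rw [← Real.exp_nat_mul, ht]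
          congr 1
          ring
      _ ≤ Real.exp (-(8*t/(d:ℝ)^2 * (j:ℝ)^2)) + Real.exp (-(8*t/(d:ℝ)^2 * ((d:ℝ)-(j:ℝ))^2)) :=
          cosbound d j t ht0.le hj1 hjd
      _ = Real.exp (-(γ * (j:ℝ)^2)) + Real.exp (-(γ * ((d:ℝ)-(j:ℝ))^2)) := by rw [hγ]
  -- reflection
  have hrefl : ∑ j ∈ Finset.Ico 1 d, Real.exp (-(γ * ((d:ℝ)-(j:ℝ))^2)) =
      ∑ j ∈ Finset.Ico 1 d, Real.exp (-(γ * (j:ℝ)^2)) := by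
    apply Finset.sum_bij' (i := fun j _ => d - j) (j := fun j _ => d - j)
    · intro a ha
      simp only [Finset.mem_Ico] at ha ⊢
      omega
    · intro a ha
      simp only [Finset.mem_Ico] at ha ⊢
      omega
    · intro a ha
      simp only [Finset.mem_Ico] at ha
      omega
    · intro a ha
      simp only [Finset.mem_Ico] at ha
      omega
    · intro a ha
      simp only [Finset.mem_Ico] at ha
      congr 2
      have : ((d - a : ℕ):ℝ) = (d:ℝ) - (a:ℝ) := by
        push_cast [Nat.cast_sub (by omega : a ≤ d)]
        ring
      rw [this]
  -- assemble
  have hmain : (d:ℝ) * ‖(S:ℂ) - 1/(d:ℂ)‖ ≤ 2 * (3 / Real.sqrt γ) := by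
    have hdc : (d:ℂ) ≠ 0 := Nat.cast_ne_zero.2 (by omega)
    have h1 : (d:ℂ) * ((S:ℂ) - 1/(d:ℂ)) = (d:ℂ)*(S:ℂ) - 1 := by
      field_simp
    calc (d:ℝ) * ‖(S:ℂ) - 1/(d:ℂ)‖
        = ‖(d:ℂ)*(S:ℂ) - 1‖ := by
          rw [← h1, norm_mul, Complex.norm_natCast]
      _ = ‖∑ j ∈ Finset.Ico 1 d, f j‖ := by rw [hkey]
      _ ≤ ∑ j ∈ Finset.Ico 1 d, ‖f j‖ := by
          exact norm_sum_le _ _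
      _ ≤ ∑ j ∈ Finset.Ico 1 d, (Real.exp (-(γ * (j:ℝ)^2)) + Real.exp (-(γ * ((d:ℝ)-(j:ℝ))^2))) :=
          Finset.sum_le_sum hterm
      _ = ∑ j ∈ Finset.Ico 1 d, Real.exp (-(γ * (j:ℝ)^2)) +
          ∑ j ∈ Finset.Ico 1 d, Real.exp (-(γ * ((d:ℝ)-(j:ℝ))^2)) := Finset.sum_add_distrib
      _ = 2 * ∑ j ∈ Finset.Ico 1 d, Real.exp (-(γ * (j:ℝ)^2)) := by rw [hrefl]; ring
      _ ≤ 2 * (3 / Real.sqrt γ) := by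
          have := sumexp hγ0 d
          linarith
  -- convert abs
  have habsr : ‖(S:ℂ) - 1/(d:ℂ)‖ = |S - 1/(d:ℝ)| := by
    rw [show ((S:ℂ) - 1/(d:ℂ)) = ((S - 1/(d:ℝ) : ℝ) : ℂ) by push_cast; ring]
    exact Complex.norm_real _
  rw [habsr] at hmain
  -- final arithmetic
  have hs8 : 0 < Real.sqrt (8*t) := Real.sqrt_pos.2 (by positivity)
  have h8 : Real.sqrt γ = Real.sqrt (8*t) / d := by
    rw [hγ, Real.sqrt_div (by positivity : (0:ℝ) ≤ 8*t), Real.sqrt_sq hd0.le]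
  have hfin1 : |S - 1/(d:ℝ)| ≤ 6 / Real.sqrt (8*t) := by
    rw [h8] at hmain
    have h2 : 2*(3/(Real.sqrt (8*t)/d)) = (d:ℝ) * (6/Real.sqrt (8*t)) := by
      field_simp
      ring
    rw [h2] at hmain
    exact le_of_mul_le_mul_left hmain hd0
  have hst : 0 < Real.sqrt t := Real.sqrt_pos.2 ht0
  have hs2 : 2 * Real.sqrt t ≤ Real.sqrt (8*t) := by
    rw [Real.sqrt_mul (by norm_num : (0:ℝ) ≤ 8)]
    have h4 : (2:ℝ) ≤ Real.sqrt 8 := by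
      rw [show (2:ℝ) = Real.sqrt 4 by
        rw [show (4:ℝ) = 2^2 by norm_num, Real.sqrt_sq (by norm_num : (0:ℝ) ≤ 2)]]
      exact Real.sqrt_le_sqrt (by norm_num)
    nlinarith [Real.sqrt_nonneg t]
  calc |S - 1/(d:ℝ)| ≤ 6 / Real.sqrt (8*t) := hfin1
    _ ≤ 3 / Real.sqrt t := by
        rw [div_le_div_iff₀ hs8 hst]
        linarith
end

section
/- Let $k \geq 2$ be an integer, let $a > b \geq 1$ be integers, and let $r \geq 0$ be an integer. Define $f(i) = \sum_{1 \leq d \leq (ai+r)^{1/k},\ \gcd(a-b,\, d^k) \mid bi+r} \frac{\mu(d) \gcd(a-b,\, d^k)}{d^k}$. Then there exists a constant $C = C(k,a,b,r) > 0$ such that for all integers $N \geq 1$, $\Big| \sum_{1 \leq i \leq N} f(i) - \theta_k(a,b,r) N \Big| \leq C N^{1/k}$, where $\theta_k(a,b,r) = \prod_{p \text{ prime},\ \gcd(a,b,p^k) \mid r} \big(1 - \gcd(a,b,p^k)/p^k\big)$. -/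
open ArithmeticFunction
open scoped ArithmeticFunction.Moebius

namespace Stmt9

noncomputable def F (k g r d : ℕ) : ℝ :=
  if Nat.gcd g (d ^ k) ∣ r then (μ d : ℝ) * (Nat.gcd g (d ^ k)) / (d : ℝ) ^ k else 0

lemma F_zero (k g r : ℕ) : F k g r 0 = 0 := by
  unfold F; split_ifs <;> simp

lemma F_one (k g r : ℕ) : F k g r 1 = 1 := by
  unfold F
  rw [if_pos (by simp)]
  simp

lemma F_mul (k g r : ℕ) {m n : ℕ} (h : Nat.Coprime m n) :
    F k g r (m * n) = F k g r m * F k g r n := by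
  have hco : Nat.Coprime (m ^ k) (n ^ k) := Nat.Coprime.pow _ _ h
  have hg : Nat.gcd g ((m * n) ^ k) = Nat.gcd g (m ^ k) * Nat.gcd g (n ^ k) := by
    rw [mul_pow]; exact Nat.Coprime.gcd_mul _ hco
  have hco2 : Nat.Coprime (Nat.gcd g (m ^ k)) (Nat.gcd g (n ^ k)) :=
    Nat.Coprime.coprime_dvd_left (Nat.gcd_dvd_right _ _)
      (Nat.Coprime.coprime_dvd_right (Nat.gcd_dvd_right _ _) hco)
  have hmu : (μ (m * n) : ℤ) = μ m * μ n := isMultiplicative_moebius.map_mul_of_coprime h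
  unfold F
  rw [hg]
  by_cases h1 : Nat.gcd g (m ^ k) ∣ r <;> by_cases h2 : Nat.gcd g (n ^ k) ∣ r
  · rw [if_pos (Nat.Coprime.mul_dvd_of_dvd_of_dvd hco2 h1 h2), if_pos h1, if_pos h2,
      div_mul_div_comm]
    congr 1
    · push_cast [hmu]; ring
    · push_cast; ring
  · rw [if_neg (fun hd => h2 (dvd_trans (Dvd.intro_left _ rfl) hd)), if_neg h2, mul_zero]
  · rw [if_neg (fun hd => h1 (dvd_trans (Dvd.intro _ rfl) hd)), if_neg h1, zero_mul]
  · rw [if_neg (fun hd => h1 (dvd_trans (Dvd.intro _ rfl) hd)), if_neg h1, zero_mul]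

lemma F_norm_le (k g r : ℕ) (hg : 1 ≤ g) (d : ℕ) :
    ‖F k g r d‖ ≤ (g : ℝ) / (d : ℝ) ^ k := by
  rcases Nat.eq_zero_or_pos d with rfl | hd
  · rw [F_zero]; simp; positivity
  have hd0 : (0:ℝ) < (d:ℝ)^k := by positivity
  have h1 : |(μ d : ℝ)| ≤ 1 := by exact_mod_cast (abs_moebius_le_one (n := d))
  have h2 : (Nat.gcd g (d^k) : ℝ) ≤ g := Nat.cast_le.mpr (Nat.le_of_dvd hg (Nat.gcd_dvd_left _ _))
  unfold F
  split_ifs with h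
  · rw [Real.norm_eq_abs, abs_div, abs_mul, abs_of_pos hd0, abs_of_nonneg (by positivity : (0:ℝ) ≤ (Nat.gcd g (d^k) : ℝ))]
    apply div_le_div₀ (by positivity) ?_ hd0 le_rfl
    calc |(μ d : ℝ)| * (Nat.gcd g (d^k) : ℝ) ≤ 1 * (g:ℝ) :=
          mul_le_mul h1 h2 (by positivity) zero_le_one
      _ = (g:ℝ) := one_mul _
  · simp; positivity

lemma F_summable_norm (k g r : ℕ) (hg : 1 ≤ g) (hk : 2 ≤ k) :
    Summable (fun d => ‖F k g r d‖) := by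
  refine Summable.of_nonneg_of_le (fun d => norm_nonneg _) (fun d => ?_)
    (((Real.summable_one_div_nat_pow.mpr one_lt_two).mul_left (g:ℝ)))
  rcases Nat.eq_zero_or_pos d with rfl | hd
  · rw [F_zero]; simp
  refine (F_norm_le k g r hg d).trans ?_
  rw [mul_one_div]
  apply div_le_div₀ (by positivity) le_rfl (by positivity)
  · have : (1:ℝ) ≤ (d:ℝ) := by exact_mod_cast hd
    exact pow_le_pow_right₀ this hk


lemma tsum_pow_eq (k g r : ℕ) (p : ℕ) (hp : p.Prime) :
    ∑' e : ℕ, F k g r (p ^ e) = 1 + F k g r p := by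
  have hv : ∀ e ∉ ({0, 1} : Finset ℕ), F k g r (p ^ e) = 0 := by
    intro e he
    simp only [Finset.mem_insert, Finset.mem_singleton] at he
    push_neg at he
    unfold F
    have : μ (p ^ e) = 0 := by
      rw [moebius_apply_prime_pow hp he.1, if_neg he.2]
    rw [this]
    split_ifs <;> simp
  rw [tsum_eq_sum hv, Finset.sum_pair (by norm_num : (0:ℕ) ≠ 1), pow_zero, pow_one, F_one]

lemma tsum_F_eq (k g r : ℕ) (hg : 1 ≤ g) (hk : 2 ≤ k) :
    ∑' d : ℕ, F k g r d =
      ∏' p : {p : ℕ // p.Prime ∧ Nat.gcd g (p ^ k) ∣ r},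
        (1 - (Nat.gcd g ((p : ℕ) ^ k) : ℝ) / (p : ℕ) ^ k) := by
  rw [← EulerProduct.eulerProduct_tprod (F_one k g r) (fun hmn => F_mul k g r hmn)
    (F_summable_norm k g r hg hk) (F_zero k g r)]
  set G : ℕ → ℝ := fun p => if Nat.gcd g (p ^ k) ∣ r then 1 - (Nat.gcd g (p ^ k) : ℝ) / (p : ℝ) ^ k else 1 with hG
  have h1 : ∀ p : Nat.Primes, ∑' e : ℕ, F k g r ((p : ℕ) ^ e) = G (p : ℕ) := by
    intro p
    rw [tsum_pow_eq k g r _ p.2, hG]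
    beta_reduce
    by_cases h : Nat.gcd g ((p:ℕ) ^ k) ∣ r
    · rw [if_pos h]
      unfold F
      rw [if_pos h, moebius_apply_prime p.2]
      push_cast
      ring
    · rw [if_neg h]
      unfold F
      rw [if_neg h]
      ring
  rw [tprod_congr h1]
  have h2 : ∏' p : Nat.Primes, G (p : ℕ) = ∏' p : {p : ℕ | p.Prime}, G (p : ℕ) := rfl
  rw [h2, tprod_subtype {p : ℕ | p.Prime} G]
  have h3 : ∏' p : {p : ℕ // p.Prime ∧ Nat.gcd g (p ^ k) ∣ r},
      (1 - (Nat.gcd g ((p : ℕ) ^ k) : ℝ) / (p : ℕ) ^ k) =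
      ∏' p : {p : ℕ | p.Prime ∧ Nat.gcd g (p ^ k) ∣ r},
        (fun q : ℕ => 1 - (Nat.gcd g (q ^ k) : ℝ) / (q : ℝ) ^ k) (p : ℕ) := rfl
  have h4 := tprod_subtype {p : ℕ | p.Prime ∧ Nat.gcd g (p ^ k) ∣ r}
      (fun q : ℕ => 1 - (Nat.gcd g (q ^ k) : ℝ) / (q : ℝ) ^ k)
  rw [h3, h4]
  apply tprod_congr
  intro n
  by_cases hn : n.Prime <;> by_cases hd : Nat.gcd g (n ^ k) ∣ r <;>
    simp [Set.mulIndicator, hn, hd, hG]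


/-- Solve the linear congruence: the set of `i` with `g' ∣ b*i + r` is a residue class. -/
lemma solve_cong {b g' r : ℕ} (hb : 1 ≤ b) (hg' : 1 ≤ g') (hr : Nat.gcd b g' ∣ r) :
    ∃ v : ℕ, ∀ i : ℕ, (g' ∣ b * i + r ↔ i ≡ v [MOD g' / Nat.gcd b g']) := by
  set e := Nat.gcd b g' with he
  have he0 : 0 < e := Nat.gcd_pos_of_pos_left _ hb
  obtain ⟨b₁, hb₁⟩ : e ∣ b := Nat.gcd_dvd_left _ _
  obtain ⟨m, hm⟩ : e ∣ g' := Nat.gcd_dvd_right _ _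
  obtain ⟨r₁, hr₁⟩ : e ∣ r := hr
  have hmdiv : g' / e = m := by rw [hm]; exact Nat.mul_div_cancel_left m he0
  have hm0 : 0 < m := by
    rcases Nat.eq_zero_or_pos m with rfl | h
    · omega
    · exact h
  haveI : NeZero m := ⟨hm0.ne'⟩
  have hcop : Nat.Coprime b₁ m := by
    have := Nat.coprime_div_gcd_div_gcd (m := b) (n := g') (by omega)
    rwa [← he, hb₁, hm, Nat.mul_div_cancel_left _ he0, Nat.mul_div_cancel_left _ he0] at this
  have hu : IsUnit (b₁ : ZMod m) := (ZMod.isUnit_iff_coprime b₁ m).mpr hcop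
  set V : ZMod m := ↑hu.unit⁻¹ * (-(r₁ : ZMod m)) with hV
  refine ⟨V.val, fun i => ?_⟩
  rw [hmdiv]
  have step1 : g' ∣ b * i + r ↔ m ∣ b₁ * i + r₁ := by
    rw [hm, hb₁, hr₁, show e * b₁ * i + e * r₁ = e * (b₁ * i + r₁) from by ring]
    exact mul_dvd_mul_iff_left he0.ne'
  rw [step1, ← ZMod.natCast_eq_zero_iff]
  push_cast
  constructor
  · intro h
    have h2 : (b₁ : ZMod m) * i = -(r₁ : ZMod m) := by linear_combination h
    have h3 : (i : ZMod m) = V := by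
      rw [hV, ← h2, ← mul_assoc]
      rw [IsUnit.val_inv_mul hu, one_mul]
    rw [← ZMod.natCast_eq_natCast_iff, ZMod.natCast_val, ZMod.cast_id]
    exact h3
  · intro h
    have h3 : (i : ZMod m) = V := by
      rw [← ZMod.natCast_eq_natCast_iff, ZMod.natCast_val, ZMod.cast_id] at h
      exact h
    rw [h3, hV, ← mul_assoc, IsUnit.mul_val_inv hu, one_mul]
    ring

/-- Counting members of a residue class in `Icc 1 N`. -/
lemma count_residue_class (N m v : ℕ) (hm : 0 < m) :
    |(((Finset.Icc 1 N).filter (fun i => i ≡ v [MOD m])).card : ℝ) - N / m| ≤ 3 := by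
  set c := ((Finset.Icc 1 N).filter (fun i => i ≡ v [MOD m])).card with hc
  set q := (N + 1) / m with hq
  have key := Nat.count_modEq_card (N + 1) hm v
  have h1 : Nat.count (fun x => x ≡ v [MOD m]) (N + 1)
      = ((Finset.range (N + 1)).filter (fun i => i ≡ v [MOD m])).card := by
    simp [Nat.count_eq_card_filter_range]
  have h2 : Finset.range (N + 1) = insert 0 (Finset.Icc 1 N) := by
    ext x
    simp only [Finset.mem_range, Finset.mem_Icc, Finset.mem_insert]
    omega
  have h3 : ((Finset.range (N + 1)).filter (fun i => i ≡ v [MOD m])).card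
      = (if (0:ℕ) ≡ v [MOD m] then 1 else 0) + c := by
    rw [h2, Finset.filter_insert]
    split_ifs with h
    · rw [Finset.card_insert_of_notMem (by simp [Finset.mem_filter])]
      omega
    · exact (zero_add _).symm
  -- nat relation
  have hnat : q + (if v % m < (N + 1) % m then 1 else 0)
      = (if (0:ℕ) ≡ v [MOD m] then 1 else 0) + c := by
    rw [← key, h1, h3]
  have hcard1 : c ≤ q + 1 := by split_ifs at hnat <;> omega
  have hcard2 : q ≤ c + 1 := by split_ifs at hnat <;> omega
  -- real bounds on q
  have hm1 : (1:ℝ) ≤ (m:ℝ) := by exact_mod_cast hm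
  have hm0 : (0:ℝ) < (m:ℝ) := by linarith
  have hdm : ((N + 1) % m : ℕ) < m := Nat.mod_lt _ hm
  have heq : ((N:ℝ) + 1) = m * q + ((N + 1) % m : ℕ) := by
    exact_mod_cast (Nat.div_add_mod (N + 1) m).symm
  have hremr : (0:ℝ) ≤ ((N + 1) % m : ℕ) := by positivity
  have hremr2 : (((N + 1) % m : ℕ) : ℝ) < m := by exact_mod_cast hdm
  have hq1 : (q:ℝ) ≤ ((N:ℝ) + 1) / m := by
    rw [le_div_iff₀ hm0]; nlinarith
  have hq2 : ((N:ℝ) + 1) / m - 1 ≤ (q:ℝ) := by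
    rw [sub_le_iff_le_add, div_le_iff₀ hm0]; nlinarith
  have hsplit : ((N:ℝ) + 1) / m = (N:ℝ) / m + 1 / m := by ring
  have hinv : (1:ℝ) / m ≤ 1 := by
    rw [div_le_one hm0]; exact hm1
  have hinv0 : (0:ℝ) ≤ 1 / m := by positivity
  have hc1 : (c:ℝ) ≤ (q:ℝ) + 1 := by exact_mod_cast hcard1
  have hc2 : (q:ℝ) ≤ (c:ℝ) + 1 := by exact_mod_cast hcard2
  rw [abs_le]
  constructor <;> nlinarith


lemma count_est (k a b r N d : ℕ) (hb : 1 ≤ b) (hab : b < a) (hd : 1 ≤ d) :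
    |(((Finset.Icc 1 N).filter
        (fun i => d ^ k ≤ a * i + r ∧ Nat.gcd (a - b) (d ^ k) ∣ b * i + r)).card : ℝ)
      - (if Nat.gcd (Nat.gcd a b) (d ^ k) ∣ r then
          (N : ℝ) * (Nat.gcd (Nat.gcd a b) (d ^ k)) / (Nat.gcd (a - b) (d ^ k)) else 0)|
      ≤ (d : ℝ) ^ k / a + 3 := by
  have ha0 : 0 < a := by omega
  have hg'pos : 1 ≤ Nat.gcd (a - b) (d ^ k) := Nat.gcd_pos_of_pos_left _ (by omega)
  have he_eq : Nat.gcd b (Nat.gcd (a - b) (d ^ k)) = Nat.gcd (Nat.gcd a b) (d ^ k) := by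
    rw [← Nat.gcd_assoc, Nat.gcd_sub_self_right (le_of_lt hab), Nat.gcd_comm b a]
  have hepos : 1 ≤ Nat.gcd (Nat.gcd a b) (d ^ k) := by
    rw [← he_eq]; exact Nat.gcd_pos_of_pos_left _ hb
  set cnt := ((Finset.Icc 1 N).filter
    (fun i => d ^ k ≤ a * i + r ∧ Nat.gcd (a - b) (d ^ k) ∣ b * i + r)).card with hcnt
  set c1 := ((Finset.Icc 1 N).filter (fun i => Nat.gcd (a - b) (d ^ k) ∣ b * i + r)).card with hc1
  set bad := ((Finset.Icc 1 N).filter (fun i => ¬ d ^ k ≤ a * i + r)).card with hbad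
  have hle1 : cnt ≤ c1 := Finset.card_le_card (Finset.monotone_filter_right _ (fun i _ hi => hi.2))
  have hle2 : c1 ≤ cnt + bad := by
    refine le_trans (Finset.card_le_card ?_) (Finset.card_union_le _ _)
    intro i hi
    simp only [Finset.mem_filter, Finset.mem_union] at *
    tauto
  -- bound on bad
  have hbadle : (bad : ℝ) ≤ (d : ℝ) ^ k / a := by
    have hsub : (Finset.Icc 1 N).filter (fun i => ¬ d ^ k ≤ a * i + r) ⊆
        Finset.Icc 1 (d ^ k / a) := by
      intro i hi
      simp only [Finset.mem_filter, Finset.mem_Icc, not_le] at hi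
      refine Finset.mem_Icc.mpr ⟨hi.1.1, ?_⟩
      rw [Nat.le_div_iff_mul_le ha0, mul_comm]
      omega
    have h1 : bad ≤ d ^ k / a := by
      have := Finset.card_le_card hsub
      rwa [Nat.card_Icc, Nat.add_sub_cancel] at this
    calc (bad : ℝ) ≤ ((d ^ k / a : ℕ) : ℝ) := by exact_mod_cast h1
      _ ≤ ((d ^ k : ℕ) : ℝ) / a := Nat.cast_div_le
      _ = (d : ℝ) ^ k / a := by push_cast; ring
  have hcnt_c1 : |(cnt : ℝ) - c1| ≤ (d : ℝ) ^ k / a := by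
    have r1 : (cnt : ℝ) ≤ c1 := by exact_mod_cast hle1
    have r2 : (c1 : ℝ) ≤ cnt + bad := by exact_mod_cast hle2
    rw [abs_le]
    constructor <;> linarith
  by_cases her : Nat.gcd (Nat.gcd a b) (d ^ k) ∣ r
  · -- main case
    obtain ⟨v, hv⟩ := solve_cong hb hg'pos (he_eq ▸ her)
    set m₀ := Nat.gcd (a - b) (d ^ k) / Nat.gcd b (Nat.gcd (a - b) (d ^ k)) with hm₀
    have hm₀pos : 0 < m₀ := Nat.div_pos (Nat.le_of_dvd (by omega) (Nat.gcd_dvd_right _ _)) (by omega)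
    have hc1eq : c1 = ((Finset.Icc 1 N).filter (fun i => i ≡ v [MOD m₀])).card := by
      rw [hc1]
      congr 1
      apply Finset.filter_congr
      intro i _
      simpa using hv i
    have hcount := count_residue_class N m₀ v hm₀pos
    rw [← hc1eq] at hcount
    -- N * e / g' = N / m₀
    have hgm : Nat.gcd (a - b) (d ^ k) = Nat.gcd (Nat.gcd a b) (d ^ k) * m₀ := by
      rw [hm₀, he_eq]
      exact (Nat.mul_div_cancel' (he_eq ▸ Nat.gcd_dvd_right b _)).symm
    have he0 : ((Nat.gcd (Nat.gcd a b) (d ^ k) : ℕ) : ℝ) ≠ 0 := by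
      have : (0:ℝ) < ((Nat.gcd (Nat.gcd a b) (d ^ k) : ℕ) : ℝ) := by exact_mod_cast hepos
      linarith
    have hm₀0 : ((m₀ : ℕ) : ℝ) ≠ 0 := by
      have : (0:ℝ) < ((m₀ : ℕ) : ℝ) := by exact_mod_cast hm₀pos
      linarith
    have hval : (N : ℝ) * (Nat.gcd (Nat.gcd a b) (d ^ k)) / (Nat.gcd (a - b) (d ^ k))
        = (N : ℝ) / m₀ := by
      rw [hgm]
      push_cast
      field_simp
    rw [if_pos her, hval]
    calc |(cnt : ℝ) - (N : ℝ) / m₀|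
        ≤ |(cnt : ℝ) - c1| + |(c1 : ℝ) - (N : ℝ) / m₀| := abs_sub_le _ _ _
      _ ≤ (d : ℝ) ^ k / a + 3 := add_le_add hcnt_c1 hcount
  · -- e ∤ r : c1 = 0
    have hc10 : c1 = 0 := by
      rw [hc1, Finset.card_eq_zero]
      apply Finset.filter_false_of_mem
      intro i _ hdvd
      apply her
      rw [← he_eq]
      have h1 : Nat.gcd b (Nat.gcd (a - b) (d ^ k)) ∣ b * i :=
        Dvd.dvd.mul_right (Nat.gcd_dvd_left _ _) i
      have h2 : Nat.gcd b (Nat.gcd (a - b) (d ^ k)) ∣ b * i + r :=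
        dvd_trans (Nat.gcd_dvd_right _ _) hdvd
      have := Nat.dvd_sub h2 h1
      rwa [Nat.add_sub_cancel_left] at this
    have : cnt = 0 := by omega
    rw [if_neg her, this]
    simp only [Nat.cast_zero, sub_zero, abs_zero]
    positivity


lemma key_ineq (k : ℕ) (hk : 2 ≤ k) (x : ℝ) (hx : 1 ≤ x) :
    1 / (x + 1) ^ k ≤ 1 / x ^ (k - 1) - 1 / (x + 1) ^ (k - 1) := by
  obtain ⟨k₂, rfl⟩ : ∃ k₂, k = k₂ + 2 := ⟨k - 2, by omega⟩
  have hs : k₂ + 2 - 1 = k₂ + 1 := by omega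
  rw [hs]
  have hx0 : (0:ℝ) < x := by linarith
  have hx1 : (0:ℝ) < x + 1 := by linarith
  have hpoly : (x + 2) * x ^ (k₂ + 1) ≤ (x + 1) ^ (k₂ + 2) := by
    calc (x + 2) * x ^ (k₂ + 1) = (x ^ 2 + 2 * x) * x ^ k₂ := by ring
      _ ≤ (x + 1) ^ 2 * x ^ k₂ := by
          apply mul_le_mul_of_nonneg_right (by nlinarith) (by positivity)
      _ ≤ (x + 1) ^ 2 * (x + 1) ^ k₂ := by
          apply mul_le_mul_of_nonneg_left (pow_le_pow_left₀ (by positivity) (by linarith) _)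
            (by positivity)
      _ = (x + 1) ^ (k₂ + 2) := by ring
  have hsum : 1 / (x + 1) ^ (k₂ + 2) + 1 / (x + 1) ^ (k₂ + 1) = (x + 2) / (x + 1) ^ (k₂ + 2) := by
    field_simp
    ring
  have hdiv : (x + 2) / (x + 1) ^ (k₂ + 2) ≤ 1 / x ^ (k₂ + 1) := by
    rw [div_le_div_iff₀ (by positivity) (by positivity), one_mul]
    linarith
  linarith

lemma tail_bound (k g r : ℕ) (hg : 1 ≤ g) (hk : 2 ≤ k) (D : ℕ) (hD : 1 ≤ D) :
    |(∑' d : ℕ, F k g r d) - ∑ d ∈ Finset.Icc 1 D, F k g r d| ≤ (g : ℝ) / (D : ℝ) ^ (k - 1) := by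
  have hsum := F_summable_norm k g r hg hk
  have hsum' : Summable (F k g r) := hsum.of_norm
  have hIcc : ∑ d ∈ Finset.Icc 1 D, F k g r d = ∑ d ∈ Finset.range (D + 1), F k g r d := by
    have h2 : Finset.range (D + 1) = insert 0 (Finset.Icc 1 D) := by
      ext x; simp only [Finset.mem_range, Finset.mem_Icc, Finset.mem_insert]; omega
    rw [h2, Finset.sum_insert (by simp), F_zero, zero_add]
  have hshift := Summable.sum_add_tsum_nat_add (f := F k g r) (D + 1) hsum'
  have heq : (∑' d : ℕ, F k g r d) - ∑ d ∈ Finset.Icc 1 D, F k g r d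
      = ∑' i : ℕ, F k g r (i + (D + 1)) := by
    rw [hIcc, ← hshift]; ring
  rw [heq]
  have hsumshift : Summable (fun i => F k g r (i + (D + 1))) :=
    (summable_nat_add_iff (D + 1)).mpr hsum'
  have hs2 : Summable (fun i : ℕ => ‖F k g r (i + (D + 1))‖) := by
    have := hsumshift.abs
    simpa [Real.norm_eq_abs] using this
  rw [← Real.norm_eq_abs]
  refine (norm_tsum_le_tsum_norm hs2).trans ?_
  -- now bound the tsum of norms
  apply Summable.tsum_le_of_sum_le hs2
  intro s
  obtain ⟨M, hM⟩ := Finset.exists_nat_subset_range s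
  set ψ : ℕ → ℝ := fun j => (g : ℝ) / ((D : ℝ) + j) ^ (k - 1) with hψ
  have hψ0 : ∀ j, 0 ≤ ψ j := by
    intro j
    apply div_nonneg (by positivity)
    positivity
  have hterm : ∀ i : ℕ, ‖F k g r (i + (D + 1))‖ ≤ ψ i - ψ (i + 1) := by
    intro i
    set x : ℝ := (D : ℝ) + i with hx
    have hx1 : 1 ≤ x := by
      have : (1:ℝ) ≤ (D:ℝ) := by exact_mod_cast hD
      have : (0:ℝ) ≤ (i:ℝ) := by positivity
      rw [hx]; linarith
    have h1 := F_norm_le k g r hg (i + (D + 1))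
    have hcast : ((i + (D + 1) : ℕ) : ℝ) = x + 1 := by rw [hx]; push_cast; ring
    rw [hcast] at h1
    refine h1.trans ?_
    have hkey := key_ineq k hk x hx1
    have hg0 : (0:ℝ) ≤ (g:ℝ) := by positivity
    have := mul_le_mul_of_nonneg_left hkey hg0
    rw [mul_sub] at this
    calc (g:ℝ) / (x + 1) ^ k = (g:ℝ) * (1 / (x + 1) ^ k) := by ring
      _ ≤ (g:ℝ) * (1 / x ^ (k-1)) - (g:ℝ) * (1 / (x + 1) ^ (k-1)) := this
      _ = ψ i - ψ (i + 1) := by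
          rw [hψ]
          push_cast
          rw [hx]
          ring_nf
  calc ∑ i ∈ s, ‖F k g r (i + (D + 1))‖
      ≤ ∑ i ∈ Finset.range M, ‖F k g r (i + (D + 1))‖ :=
        Finset.sum_le_sum_of_subset_of_nonneg hM (fun _ _ _ => norm_nonneg _)
    _ ≤ ∑ i ∈ Finset.range M, (ψ i - ψ (i + 1)) := Finset.sum_le_sum (fun i _ => hterm i)
    _ = ψ 0 - ψ M := Finset.sum_range_sub' ψ M
    _ ≤ ψ 0 := by linarith [hψ0 M]
    _ = (g : ℝ) / (D : ℝ) ^ (k - 1) := by rw [hψ]; norm_num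


lemma rpow_inv_pow (k x : ℕ) (hk : k ≠ 0) : (((x:ℝ)) ^ ((1:ℝ)/k)) ^ k = (x:ℝ) := by
  have hx0 : (0:ℝ) ≤ (x:ℝ) := Nat.cast_nonneg x
  rw [← Real.rpow_natCast ((x:ℝ) ^ ((1:ℝ)/k)) k, ← Real.rpow_mul hx0, one_div,
    inv_mul_cancel₀ (by exact_mod_cast hk : (k:ℝ) ≠ 0), Real.rpow_one]

lemma le_floor_rpow (k : ℕ) (hk : k ≠ 0) (x d : ℕ) :
    d ≤ ⌊((x:ℝ)) ^ ((1:ℝ)/k)⌋₊ ↔ d ^ k ≤ x := by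
  have hx0 : (0:ℝ) ≤ (x:ℝ) := Nat.cast_nonneg x
  rw [Nat.le_floor_iff (Real.rpow_nonneg hx0 _)]
  constructor
  · intro h
    have h2 := pow_le_pow_left₀ (by positivity) h k
    rw [rpow_inv_pow k x hk] at h2
    exact_mod_cast h2
  · intro h
    have h' : ((d:ℝ)) ^ k ≤ ((x:ℝ) ^ ((1:ℝ)/k)) ^ k := by
      rw [rpow_inv_pow k x hk]; exact_mod_cast h
    exact le_of_pow_le_pow_left₀ hk (Real.rpow_nonneg hx0 _) h'

lemma t_norm_le (k c : ℕ) (hc : 1 ≤ c) (d : ℕ) (hd : 1 ≤ d) :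
    |(μ d : ℝ) * (Nat.gcd c (d ^ k)) / (d : ℝ) ^ k| ≤ (c : ℝ) / (d : ℝ) ^ k := by
  have hd0 : (0:ℝ) < (d:ℝ)^k := by positivity
  have h1 : |(μ d : ℝ)| ≤ 1 := by exact_mod_cast (abs_moebius_le_one (n := d))
  have h2 : (Nat.gcd c (d^k) : ℝ) ≤ c := Nat.cast_le.mpr (Nat.le_of_dvd hc (Nat.gcd_dvd_left _ _))
  rw [abs_div, abs_mul, abs_of_pos hd0,
    abs_of_nonneg (by positivity : (0:ℝ) ≤ (Nat.gcd c (d^k) : ℝ))]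
  apply div_le_div₀ (by positivity) ?_ hd0 le_rfl
  calc |(μ d : ℝ)| * (Nat.gcd c (d^k) : ℝ) ≤ 1 * (c:ℝ) :=
        mul_le_mul h1 h2 (by positivity) zero_le_one
    _ = (c:ℝ) := one_mul _


end Stmt9

/-- For `k ≥ 2`, integers `a > b ≥ 1`, `r ≥ 0`, and
`f(i) = ∑_{1 ≤ d ≤ (ai+r)^(1/k), gcd(a-b,d^k) ∣ bi+r} μ(d) gcd(a-b,d^k) / d^k`,
there exists `C = C(k,a,b,r) > 0` such that for all `N ≥ 1`,
`|∑_{1 ≤ i ≤ N} f(i) - θ_k(a,b,r) N| ≤ C N^(1/k)`, where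
`θ_k(a,b,r) = ∏_{p prime, gcd(a,b,p^k) ∣ r} (1 - gcd(a,b,p^k)/p^k)`. -/
theorem stmt_9 (k a b r : ℕ) (hk : 2 ≤ k) (hb : 1 ≤ b) (hab : b < a)
    (f : ℕ → ℝ)
    (hf : ∀ i : ℕ, f i =
      ∑ d ∈ (Finset.Icc 1 ⌊((a * i + r : ℕ) : ℝ) ^ ((1 : ℝ) / k)⌋₊).filter
          (fun d => Nat.gcd (a - b) (d ^ k) ∣ b * i + r),
        (μ d : ℝ) * Nat.gcd (a - b) (d ^ k) / (d : ℝ) ^ k) :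
    ∃ C : ℝ, 0 < C ∧ ∀ N : ℕ, 1 ≤ N →
      |(∑ i ∈ Finset.Icc 1 N, f i) -
          (∏' p : {p : ℕ // p.Prime ∧ Nat.gcd (Nat.gcd a b) (p ^ k) ∣ r},
            (1 - (Nat.gcd (Nat.gcd a b) ((p : ℕ) ^ k) : ℝ) / (p : ℕ) ^ k)) * N| ≤
        C * (N : ℝ) ^ ((1 : ℝ) / k) := by
  classical
  have hk0 : k ≠ 0 := by omega
  have hg : 1 ≤ Nat.gcd a b := Nat.gcd_pos_of_pos_left _ (by omega)
  have ha0 : (0:ℝ) < (a:ℝ) := by exact_mod_cast (by omega : 0 < a)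
  set A : ℝ := ((a - b : ℕ) : ℝ) with hA
  have hA1 : 1 ≤ A := by rw [hA]; exact_mod_cast (by omega : 1 ≤ a - b)
  have hA0 : 0 ≤ A := by linarith
  set K : ℝ := ∑' n : ℕ, 1 / ((n:ℝ))^2 with hK
  have hK0 : 0 ≤ K := tsum_nonneg (fun n => by positivity)
  refine ⟨A * ((a:ℝ) + r) / a + 3 * A * K + (Nat.gcd a b : ℝ) * 2 ^ (k-1) + 1, ?_, ?_⟩
  · have h1 : (0:ℝ) ≤ A * ((a:ℝ) + r) / a := by positivity
    have h2 : (0:ℝ) ≤ 3 * A * K := by positivity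
    have h3 : (0:ℝ) ≤ (Nat.gcd a b : ℝ) * 2 ^ (k-1) := by positivity
    linarith
  intro N hN
  rw [← Stmt9.tsum_F_eq k (Nat.gcd a b) r hg hk]
  set L : ℝ := ∑' d : ℕ, Stmt9.F k (Nat.gcd a b) r d with hL
  set D : ℕ := ⌊((a * N + r : ℕ) : ℝ) ^ ((1:ℝ)/k)⌋₊ with hDdef
  have hDmem : ∀ x d : ℕ,
      d ∈ Finset.Icc 1 ⌊((a * x + r : ℕ) : ℝ) ^ ((1:ℝ)/k)⌋₊ ↔ 1 ≤ d ∧ d ^ k ≤ a * x + r := by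
    intro x d
    rw [Finset.mem_Icc, Stmt9.le_floor_rpow k hk0]
  -- Step 1 : rewrite f i as a sum over Icc 1 D
  have step1 : ∀ i ∈ Finset.Icc 1 N, f i =
      ∑ d ∈ Finset.Icc 1 D, (if d ^ k ≤ a * i + r ∧ Nat.gcd (a - b) (d ^ k) ∣ b * i + r
        then (μ d : ℝ) * (Nat.gcd (a - b) (d ^ k)) / (d : ℝ) ^ k else 0) := by
    intro i hi
    rw [hf i, Finset.sum_filter]
    have hcong : ∀ d ∈ Finset.Icc 1 ⌊((a * i + r : ℕ) : ℝ) ^ ((1:ℝ)/k)⌋₊,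
        (if Nat.gcd (a - b) (d ^ k) ∣ b * i + r
          then (μ d : ℝ) * (Nat.gcd (a - b) (d ^ k)) / (d : ℝ) ^ k else 0)
        = (if d ^ k ≤ a * i + r ∧ Nat.gcd (a - b) (d ^ k) ∣ b * i + r
          then (μ d : ℝ) * (Nat.gcd (a - b) (d ^ k)) / (d : ℝ) ^ k else 0) := by
      intro d hd
      have hP := ((hDmem i d).mp hd).2
      simp [hP]
    rw [Finset.sum_congr rfl hcong]
    apply Finset.sum_subset
    · intro d hd
      have h1 := (hDmem i d).mp hd
      refine (hDmem N d).mpr ⟨h1.1, le_trans h1.2 ?_⟩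
      have h2 : a * i ≤ a * N := Nat.mul_le_mul_left a (Finset.mem_Icc.mp hi).2
      omega
    · intro d hd hnd
      rw [if_neg]
      intro hcon
      exact hnd ((hDmem i d).mpr ⟨((hDmem N d).mp hd).1, hcon.1⟩)
  -- Step 2 : swap sums
  have step2 : (∑ i ∈ Finset.Icc 1 N, f i)
      = ∑ d ∈ Finset.Icc 1 D, ((μ d : ℝ) * (Nat.gcd (a - b) (d ^ k)) / (d : ℝ) ^ k)
          * (((Finset.Icc 1 N).filter
              (fun i => d ^ k ≤ a * i + r ∧ Nat.gcd (a - b) (d ^ k) ∣ b * i + r)).card : ℝ) := by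
    rw [Finset.sum_congr rfl step1, Finset.sum_comm]
    refine Finset.sum_congr rfl (fun d hd => ?_)
    rw [← Finset.sum_filter, Finset.sum_const, nsmul_eq_mul, mul_comm]
  -- Step 3 : per-d bound
  have step3 : ∀ d ∈ Finset.Icc 1 D,
      |((μ d : ℝ) * (Nat.gcd (a - b) (d ^ k)) / (d : ℝ) ^ k)
          * (((Finset.Icc 1 N).filter
              (fun i => d ^ k ≤ a * i + r ∧ Nat.gcd (a - b) (d ^ k) ∣ b * i + r)).card : ℝ)
        - (N : ℝ) * Stmt9.F k (Nat.gcd a b) r d|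
      ≤ A / a + 3 * A / (d : ℝ) ^ 2 := by
    intro d hd
    have hd1 : 1 ≤ d := (Finset.mem_Icc.mp hd).1
    have hdr : (1:ℝ) ≤ (d:ℝ) := by exact_mod_cast hd1
    have hd0 : (0:ℝ) < (d:ℝ)^k := by positivity
    have hg'pos : (0:ℝ) < (Nat.gcd (a - b) (d ^ k) : ℝ) := by
      exact_mod_cast Nat.gcd_pos_of_pos_left _ (by omega : 0 < a - b)
    have hNF : (N:ℝ) * Stmt9.F k (Nat.gcd a b) r d
        = ((μ d : ℝ) * (Nat.gcd (a - b) (d ^ k)) / (d : ℝ) ^ k)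
          * (if Nat.gcd (Nat.gcd a b) (d ^ k) ∣ r
              then (N : ℝ) * (Nat.gcd (Nat.gcd a b) (d ^ k)) / (Nat.gcd (a - b) (d ^ k)) else 0) := by
      unfold Stmt9.F
      split_ifs with h
      · field_simp
      · simp
    rw [hNF, ← mul_sub, abs_mul]
    have h1 := Stmt9.t_norm_le k (a - b) (by omega) d hd1
    have h2 := Stmt9.count_est k a b r N d hb hab hd1
    calc |(μ d : ℝ) * (Nat.gcd (a - b) (d ^ k)) / (d : ℝ) ^ k| * |_ - _|
        ≤ (A / (d:ℝ)^k) * ((d:ℝ)^k / a + 3) :=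
          mul_le_mul h1 h2 (abs_nonneg _) (by positivity)
      _ = A / a + 3 * A / (d:ℝ)^k := by field_simp
      _ ≤ A / a + 3 * A / (d:ℝ)^2 := by
          have hpow : (d:ℝ)^2 ≤ (d:ℝ)^k := pow_le_pow_right₀ hdr hk
          gcongr
  -- Step 4 : global bound of main part
  have step4 : |(∑ i ∈ Finset.Icc 1 N, f i)
        - (N:ℝ) * ∑ d ∈ Finset.Icc 1 D, Stmt9.F k (Nat.gcd a b) r d|
      ≤ (D:ℝ) * (A / a) + 3 * A * K := by
    rw [step2, Finset.mul_sum, ← Finset.sum_sub_distrib]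
    refine (Finset.abs_sum_le_sum_abs _ _).trans ?_
    refine le_trans (Finset.sum_le_sum step3) ?_
    rw [Finset.sum_add_distrib, Finset.sum_const, Nat.card_Icc, Nat.add_sub_cancel, nsmul_eq_mul]
    have h5 : ∑ d ∈ Finset.Icc 1 D, 3 * A / (d:ℝ)^2 ≤ 3 * A * K := by
      have heq : ∑ d ∈ Finset.Icc 1 D, 3 * A / (d:ℝ)^2
          = 3 * A * ∑ d ∈ Finset.Icc 1 D, 1 / (d:ℝ)^2 := by
        rw [Finset.mul_sum]
        exact Finset.sum_congr rfl (fun d _ => by ring)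
      rw [heq, hK]
      apply mul_le_mul_of_nonneg_left ?_ (by positivity)
      exact Summable.sum_le_tsum _ (fun i _ => by positivity)
        (Real.summable_one_div_nat_pow.mpr one_lt_two)
    linarith
  -- D bounds and y facts
  have hD1 : 1 ≤ D := by
    rw [hDdef]
    apply (Stmt9.le_floor_rpow k hk0 (a * N + r) 1).mpr
    have h2 : 1 * 1 ≤ a * N := Nat.mul_le_mul (by omega) hN
    simpa using by omega
  have htail := Stmt9.tail_bound k (Nat.gcd a b) r hg hk D hD1
  set y : ℝ := (N:ℝ) ^ ((1:ℝ)/k) with hy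
  have hyk : y ^ k = (N:ℝ) := Stmt9.rpow_inv_pow k N hk0
  have hy0 : 0 ≤ y := Real.rpow_nonneg (Nat.cast_nonneg N) _
  have hy1 : 1 ≤ y := by
    by_contra hcon
    push_neg at hcon
    have h1 : y ^ k < 1 := pow_lt_one₀ hy0 hcon hk0
    rw [hyk] at h1
    have h2 : (1:ℝ) ≤ (N:ℝ) := by exact_mod_cast hN
    linarith
  have hy0' : (0:ℝ) < y := by linarith
  have hDub : (D:ℝ) ≤ ((a:ℝ) + r) * y := by
    have h1 : (D:ℝ) ≤ ((a * N + r : ℕ):ℝ) ^ ((1:ℝ)/k) :=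
      Nat.floor_le (Real.rpow_nonneg (Nat.cast_nonneg _) _)
    have hcmp : a * N + r ≤ (a + r) * N := by
      have h3 : r * 1 ≤ r * N := Nat.mul_le_mul_left r hN
      have h4 : (a + r) * N = a * N + r * N := by ring
      omega
    have h2 : ((a * N + r : ℕ):ℝ) ^ ((1:ℝ)/k) ≤ (((a + r) * N : ℕ):ℝ) ^ ((1:ℝ)/k) := by
      apply Real.rpow_le_rpow (Nat.cast_nonneg _) (by exact_mod_cast hcmp) (by positivity)
    have h3 : (((a + r) * N : ℕ):ℝ) ^ ((1:ℝ)/k) = (((a + r : ℕ)):ℝ) ^ ((1:ℝ)/k) * y := by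
      rw [hy, Nat.cast_mul, Real.mul_rpow (Nat.cast_nonneg _) (Nat.cast_nonneg _)]
    have h4 : (((a + r : ℕ)):ℝ) ^ ((1:ℝ)/k) ≤ ((a:ℝ) + r) := by
      have h5 : (1:ℝ) ≤ (((a + r : ℕ)):ℝ) := by exact_mod_cast (by omega : 1 ≤ a + r)
      have h6 : (1:ℝ)/k ≤ 1 := by
        rw [div_le_one (by exact_mod_cast (by omega : 0 < k))]
        exact_mod_cast (by omega : 1 ≤ k)
      have h7 := Real.rpow_le_rpow_of_exponent_le h5 h6
      rw [Real.rpow_one] at h7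
      refine h7.trans_eq ?_
      push_cast
      ring
    refine h1.trans (h2.trans ?_)
    rw [h3]
    exact mul_le_mul_of_nonneg_right h4 hy0
  have hDlb : y / 2 ≤ (D:ℝ) := by
    have h1 : N ≤ a * N + r := by
      have h2 : 1 * N ≤ a * N := Nat.mul_le_mul (by omega) le_rfl
      omega
    have h2 : y ≤ ((a * N + r : ℕ):ℝ) ^ ((1:ℝ)/k) := by
      rw [hy]
      exact Real.rpow_le_rpow (Nat.cast_nonneg N) (by exact_mod_cast h1) (by positivity)
    have h3 : ((a * N + r : ℕ):ℝ) ^ ((1:ℝ)/k) < (D:ℝ) + 1 := Nat.lt_floor_add_one _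
    have h4 : (1:ℝ) ≤ (D:ℝ) := by exact_mod_cast hD1
    by_cases hc : y ≤ 2
    · linarith
    · push_neg at hc; linarith
  -- tail contribution
  have hNpos : (0:ℝ) ≤ (N:ℝ) := Nat.cast_nonneg N
  have htail2 : (N:ℝ) * |L - ∑ d ∈ Finset.Icc 1 D, Stmt9.F k (Nat.gcd a b) r d|
      ≤ (Nat.gcd a b : ℝ) * 2 ^ (k-1) * y := by
    have hyd2 : (0:ℝ) < y/2 := by linarith
    have hp1 : (y/2)^(k-1) ≤ (D:ℝ)^(k-1) := pow_le_pow_left₀ (le_of_lt hyd2) hDlb _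
    have hp0 : (0:ℝ) < (y/2)^(k-1) := by positivity
    have hmono : (Nat.gcd a b : ℝ)/(D:ℝ)^(k-1) ≤ (Nat.gcd a b : ℝ)/(y/2)^(k-1) :=
      div_le_div₀ (by positivity) le_rfl hp0 hp1
    have hstep : (N:ℝ) * ((Nat.gcd a b : ℝ) / (y/2)^(k-1))
        = (Nat.gcd a b : ℝ) * 2 ^ (k-1) * y := by
      have hpow : y^k = y^(k-1) * y := by
        rw [← pow_succ]
        congr 1
        omega
      rw [← hyk, hpow, div_pow]
      have hyk1 : (0:ℝ) < y^(k-1) := by positivity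
      field_simp
    calc (N:ℝ) * |L - ∑ d ∈ Finset.Icc 1 D, Stmt9.F k (Nat.gcd a b) r d|
        ≤ (N:ℝ) * ((Nat.gcd a b : ℝ)/(D:ℝ)^(k-1)) :=
          mul_le_mul_of_nonneg_left htail hNpos
      _ ≤ (N:ℝ) * ((Nat.gcd a b : ℝ)/(y/2)^(k-1)) := mul_le_mul_of_nonneg_left hmono hNpos
      _ = (Nat.gcd a b : ℝ) * 2 ^ (k-1) * y := hstep
  -- final assembly
  set S : ℝ := ∑ i ∈ Finset.Icc 1 N, f i with hS
  set SB : ℝ := ∑ d ∈ Finset.Icc 1 D, Stmt9.F k (Nat.gcd a b) r d with hSB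
  have habs2 : |(N:ℝ) * SB - L * (N:ℝ)| ≤ (Nat.gcd a b : ℝ) * 2 ^ (k-1) * y := by
    rw [show (N:ℝ) * SB - L * (N:ℝ) = (N:ℝ) * (SB - L) by ring, abs_mul,
      abs_of_nonneg hNpos, abs_sub_comm]
    exact htail2
  have e1 : (D:ℝ) * (A / a) ≤ (A * ((a:ℝ) + r) / a) * y := by
    calc (D:ℝ) * (A / a) ≤ (((a:ℝ) + r) * y) * (A / a) :=
          mul_le_mul_of_nonneg_right hDub (by positivity)
      _ = (A * ((a:ℝ) + r) / a) * y := by ring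
  have e2 : 3 * A * K ≤ (3 * A * K) * y := le_mul_of_one_le_right (by positivity) hy1
  calc |S - L * (N:ℝ)|
      = |(S - (N:ℝ) * SB) + ((N:ℝ) * SB - L * (N:ℝ))| := by ring_nf
    _ ≤ |S - (N:ℝ) * SB| + |(N:ℝ) * SB - L * (N:ℝ)| := abs_add_le _ _
    _ ≤ ((D:ℝ) * (A / a) + 3 * A * K) + (Nat.gcd a b : ℝ) * 2 ^ (k-1) * y :=
        add_le_add step4 habs2
    _ ≤ (A * ((a:ℝ) + r) / a + 3 * A * K + (Nat.gcd a b : ℝ) * 2 ^ (k-1) + 1) * y := by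
        nlinarith [mul_nonneg (by positivity : (0:ℝ) ≤ (Nat.gcd a b : ℝ) * 2 ^ (k-1)) hy0, hy1, hy0]
end

section
/- Let $k \geq 2$ be an integer, let $a, b \geq 1$ be integers, and let $r \geq 0$ be an integer. Then the series $\sum_{d \geq 1,\ \gcd(a,b,d^k) \mid r} \frac{\mu(d) \gcd(a,b,d^k)}{d^k}$ converges absolutely and equals the Euler product $\prod_{p \text{ prime},\ \gcd(a,b,p^k) \mid r} \Big( 1 - \frac{\gcd(a,b,p^k)}{p^k} \Big)$. -/
open ArithmeticFunction
open scoped ArithmeticFunction.Moebius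

/-- For `k ≥ 2` and integers `a, b ≥ 1`, `r ≥ 0`, the series
`∑_{d ≥ 1, gcd(a,b,d^k) ∣ r} μ(d) gcd(a,b,d^k) / d^k` converges absolutely and equals the
Euler product `∏_{p prime, gcd(a,b,p^k) ∣ r} (1 - gcd(a,b,p^k)/p^k)`. -/
theorem stmt_10 (k a b r : ℕ) (hk : 2 ≤ k) (ha : 1 ≤ a) (hb : 1 ≤ b) :
    Summable (fun d : ℕ =>
      |if Nat.gcd (Nat.gcd a b) (d ^ k) ∣ r then
          (μ d : ℝ) * Nat.gcd (Nat.gcd a b) (d ^ k) / (d : ℝ) ^ k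
        else 0|) ∧
    (∑' d : ℕ, if Nat.gcd (Nat.gcd a b) (d ^ k) ∣ r then
        (μ d : ℝ) * Nat.gcd (Nat.gcd a b) (d ^ k) / (d : ℝ) ^ k
      else 0) =
      ∏' p : {p : ℕ // p.Prime ∧ Nat.gcd (Nat.gcd a b) (p ^ k) ∣ r},
        (1 - (Nat.gcd (Nat.gcd a b) ((p : ℕ) ^ k) : ℝ) / (p : ℕ) ^ k) := by
  set g := Nat.gcd a b with hgdef
  have hgpos : 0 < g := Nat.gcd_pos_of_pos_left _ ha
  set f : ℕ → ℝ := fun d => if Nat.gcd g (d ^ k) ∣ r then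
      (μ d : ℝ) * Nat.gcd g (d ^ k) / (d : ℝ) ^ k else 0 with hfdef
  have hf1 : f 1 = 1 := by simp [hfdef]
  have hf0 : f 0 = 0 := by simp [hfdef]
  have hμ : ∀ d : ℕ, |(μ d : ℝ)| ≤ 1 := by
    intro d
    by_cases h : Squarefree d
    · rw [moebius_apply_of_squarefree h]
      push_cast
      rw [abs_pow, abs_neg, abs_one, one_pow]
    · simp [moebius_eq_zero_of_not_squarefree h]
  -- summability
  have hsum : Summable (fun d => ‖f d‖) := by
    apply Summable.of_nonneg_of_le (fun d => norm_nonneg _) (fun d => ?_)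
      ((Real.summable_one_div_nat_pow.mpr one_lt_two).mul_left (g : ℝ))
    rcases eq_or_ne d 0 with rfl | hd
    · simp [hf0]
    · have hd1 : (1 : ℝ) ≤ d := by exact_mod_cast Nat.one_le_iff_ne_zero.mpr hd
      have h2k : (d : ℝ) ^ 2 ≤ (d : ℝ) ^ k := pow_le_pow_right₀ hd1 hk
      have hG : (Nat.gcd g (d ^ k) : ℝ) ≤ g := by
        exact_mod_cast Nat.le_of_dvd hgpos (Nat.gcd_dvd_left _ _)
      simp only [hfdef]
      split_ifs with hc
      · rw [Real.norm_eq_abs, abs_div, abs_mul, mul_one_div,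
          abs_of_nonneg (by positivity : (0:ℝ) ≤ (d : ℝ) ^ k),
          abs_of_nonneg (by positivity : (0:ℝ) ≤ (Nat.gcd g (d ^ k) : ℝ))]
        apply div_le_div₀ (by positivity) ?_ (by positivity) h2k
        calc |(μ d : ℝ)| * (Nat.gcd g (d ^ k) : ℝ) ≤ 1 * g :=
              mul_le_mul (hμ d) hG (by positivity) zero_le_one
          _ = g := one_mul _
      · simp
        positivity
  have key : ∀ m n : ℕ, Nat.Coprime m n →
      Nat.gcd g ((m * n) ^ k) = Nat.gcd g (m ^ k) * Nat.gcd g (n ^ k) := by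
    intro m n h
    rw [mul_pow]
    exact (Nat.Coprime.pow _ _ h).gcd_mul g
  have hcopG : ∀ m n : ℕ, Nat.Coprime m n →
      Nat.Coprime (Nat.gcd g (m ^ k)) (Nat.gcd g (n ^ k)) := fun m n h =>
    Nat.Coprime.coprime_dvd_left (Nat.gcd_dvd_right _ _)
      (Nat.Coprime.coprime_dvd_right (Nat.gcd_dvd_right _ _) (Nat.Coprime.pow _ _ h))
  have hmul : ∀ {m n : ℕ}, Nat.Coprime m n → f (m * n) = f m * f n := by
    intro m n h
    rcases eq_or_ne m 0 with rfl | hm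
    · have : n = 1 := by simpa [Nat.coprime_zero_left] using h
      subst this; simp [hf0, hf1]
    rcases eq_or_ne n 0 with rfl | hn
    · have : m = 1 := by simpa [Nat.coprime_zero_right] using h
      subst this; simp [hf0, hf1]
    have hcond : (Nat.gcd g ((m * n) ^ k) ∣ r) ↔
        (Nat.gcd g (m ^ k) ∣ r ∧ Nat.gcd g (n ^ k) ∣ r) := by
      rw [key m n h]
      constructor
      · exact fun hd => ⟨(dvd_mul_right _ _).trans hd, (dvd_mul_left _ _).trans hd⟩
      · exact fun ⟨h1, h2⟩ => (hcopG m n h).mul_dvd_of_dvd_of_dvd h1 h2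
    simp only [hfdef]
    by_cases h1 : Nat.gcd g (m ^ k) ∣ r <;> by_cases h2 : Nat.gcd g (n ^ k) ∣ r
    · rw [if_pos h1, if_pos h2, if_pos (hcond.mpr ⟨h1, h2⟩), key m n h]
      have hmn : μ (m * n) = μ m * μ n := isMultiplicative_moebius.map_mul_of_coprime h
      have hm0 : ((m : ℝ)) ^ k ≠ 0 := by positivity
      have hn0 : ((n : ℝ)) ^ k ≠ 0 := by
        have : (0:ℝ) < n := by exact_mod_cast Nat.pos_of_ne_zero hn
        positivity
      push_cast [hmn]
      rw [mul_pow]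
      field_simp
    · rw [if_pos h1, if_neg h2, if_neg (fun hc => h2 (hcond.mp hc).2), mul_zero]
    · rw [if_neg h1, if_pos h2, if_neg (fun hc => h1 (hcond.mp hc).1), zero_mul]
    · rw [if_neg h1, if_neg h2, if_neg (fun hc => h1 (hcond.mp hc).1), zero_mul]
  have hE := EulerProduct.eulerProduct_tprod hf1 (fun {m n} h => hmul h) hsum hf0
  -- compute local factors
  have hp_tsum : ∀ p : Nat.Primes, (∑' e : ℕ, f ((p : ℕ) ^ e)) = 1 + f p := by
    intro p
    rw [tsum_eq_sum (s := ({0, 1} : Finset ℕ)) ?_]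
    · rw [Finset.sum_pair (by norm_num : (0:ℕ) ≠ 1)]
      simp [hf1]
    · intro e he
      have he2 : 2 ≤ e := by
        simp only [Finset.mem_insert, Finset.mem_singleton] at he
        omega
      have hμ0 : μ ((p : ℕ) ^ e) = 0 := by
        apply moebius_eq_zero_of_not_squarefree
        intro hsq
        exact p.prop.prime.not_unit (hsq (p : ℕ) (by
          rw [← pow_two]; exact pow_dvd_pow _ he2))
      simp [hfdef, hμ0]
  constructor
  · have : (fun d : ℕ =>
        |if Nat.gcd g (d ^ k) ∣ r then
          (μ d : ℝ) * Nat.gcd g (d ^ k) / (d : ℝ) ^ k else 0|) = fun d => ‖f d‖ := by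
      funext d; rw [Real.norm_eq_abs]
    rw [this]
    exact hsum
  · rw [← hE]
    have hfun : ∀ p : Nat.Primes, (∑' e : ℕ, f ((p : ℕ) ^ e)) =
        (fun q : ℕ => if Nat.gcd g (q ^ k) ∣ r then
          1 - (Nat.gcd g (q ^ k) : ℝ) / (q : ℝ) ^ k else 1) (p : ℕ) := by
      intro p
      rw [hp_tsum p]
      simp only [hfdef]
      split_ifs with hc
      · rw [moebius_apply_prime p.prop]
        push_cast
        ring
      · ring
    -- now reindex
    set F : Nat.Primes → ℝ := fun p => if Nat.gcd g ((p : ℕ) ^ k) ∣ r then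
      1 - (Nat.gcd g ((p : ℕ) ^ k) : ℝ) / (p : ℝ) ^ k else 1 with hFdef
    have h1 : (∏' p : Nat.Primes, ∑' e : ℕ, f ((p : ℕ) ^ e)) = ∏' p : Nat.Primes, F p := by
      exact tprod_congr fun p => hfun p
    rw [h1]
    have emb : {p : ℕ // p.Prime ∧ Nat.gcd g (p ^ k) ∣ r} → Nat.Primes :=
      fun p => ⟨p.1, p.2.1⟩
    have hinj : Function.Injective
        (fun p : {p : ℕ // p.Prime ∧ Nat.gcd g (p ^ k) ∣ r} => (⟨p.1, p.2.1⟩ : Nat.Primes)) := by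
      intro x y hxy
      have h' := congrArg Subtype.val hxy
      exact Subtype.ext h'
    have := hinj.tprod_eq (f := F) ?_
    · refine Eq.trans this.symm (tprod_congr fun q => ?_)
      simp only [hFdef]
      rw [if_pos q.2.2]
    · intro p hp
      have hc : Nat.gcd g ((p : ℕ) ^ k) ∣ r := by
        by_contra hcn
        apply hp
        simp only [hFdef]
        rw [if_neg hcn]
      exact ⟨⟨p.1, p.prop, hc⟩, rfl⟩
end

section
/- Let $k \geq 2$ be an integer, let $a > b \geq 1$ and $r \geq 0$ be integers, and let $\alpha \in (0,1)$. Consider the $\alpha$-random walk $P_0 = r$, $P_i = P_{i-1} + W_i$, where the $W_i$ are i.i.d. with $\mathbb{P}(W_i = a) = \alpha$, $\mathbb{P}(W_i = b) = 1-\alpha$, and let $X_i$ be the indicator that $P_i$ is $k$-free. Then there exists a constant $C = C(k,a,b,r) > 0$ such that for all $i \geq 1$, $\Big| \mathbb{E}(X_i) - f(i) \Big| \leq \frac{C\, i^{1/k - 1/2}}{\sqrt{\alpha(1-\alpha)}}$, where $f(i) = \sum_{1 \leq d \leq (ai+r)^{1/k},\ \gcd(a-b,\, d^k) \mid bi+r}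 \frac{\mu(d) \gcd(a-b,\, d^k)}{d^k}$. -/
open MeasureTheory Filter ProbabilityTheory Finset





/-- A positive integer `n` is `k`-free if no `k`-th power of a prime divides it. -/
def IsKFree (k n : ℕ) : Prop := ∀ p : ℕ, p.Prime → p ∣ n → ¬ p ^ k ∣ n


open Finset in
open scoped Classical in
lemma sum_moebius_isKFree {k n D : ℕ} (hk : 1 ≤ k) (hn : 1 ≤ n)
    (hD : ∀ d, d ^ k ∣ n → d ≤ D) :
    (∑ d ∈ Finset.Icc 1 D, if d ^ k ∣ n then (ArithmeticFunction.moebius d : ℤ) else 0)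
      = if IsKFree k n then 1 else 0 := by
  classical
  have hn0 : n ≠ 0 := by omega
  set m : ℕ := ∏ p ∈ n.primeFactors, p ^ (n.factorization p / k) with hm
  have hne : ∀ p ∈ n.primeFactors, p ^ (n.factorization p / k) ≠ 0 :=
    fun p hp => pow_ne_zero _ (Nat.pos_of_mem_primeFactors hp).ne'
  have hm0 : m ≠ 0 := Finset.prod_ne_zero_iff.mpr hne
  have hfac : ∀ q : ℕ, m.factorization q = n.factorization q / k := by
    intro q
    rw [hm, Nat.factorization_prod hne]
    rw [Finsupp.finset_sum_apply]
    by_cases hq : q ∈ n.primeFactors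
    · rw [Finset.sum_eq_single q]
      · rw [(Nat.prime_of_mem_primeFactors hq).factorization_pow, Finsupp.single_eq_same]
      · intro p hp hpq
        rw [(Nat.prime_of_mem_primeFactors hp).factorization_pow,
          Finsupp.single_eq_of_ne hpq.symm]
      · intro h; exact absurd hq h
    · have h0 : n.factorization q = 0 := by
        rw [← Nat.support_factorization] at hq
        exact Finsupp.notMem_support_iff.mp hq
      rw [h0, Nat.zero_div]
      apply Finset.sum_eq_zero
      intro p hp
      rw [(Nat.prime_of_mem_primeFactors hp).factorization_pow,
        Finsupp.single_eq_of_ne]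
      intro h; exact hq (h ▸ hp)
  have hdvd : ∀ d : ℕ, d ≠ 0 → (d ^ k ∣ n ↔ d ∣ m) := by
    intro d hd0
    rw [← Nat.factorization_le_iff_dvd (pow_ne_zero _ hd0) hn0,
      ← Nat.factorization_le_iff_dvd hd0 hm0, Nat.factorization_pow]
    constructor
    · intro h q
      have := h q
      simp only [Finsupp.smul_apply, smul_eq_mul] at this
      rw [hfac q, Nat.le_div_iff_mul_le (by omega)]
      rwa [Nat.mul_comm] at this
    · intro h q
      have := h q
      rw [hfac q, Nat.le_div_iff_mul_le (by omega)] at this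
      simp only [Finsupp.smul_apply, smul_eq_mul]
      rwa [Nat.mul_comm]
  have hset : (Finset.Icc 1 D).filter (fun d => d ^ k ∣ n) = m.divisors := by
    ext d
    simp only [Finset.mem_filter, Finset.mem_Icc, Nat.mem_divisors]
    constructor
    · rintro ⟨⟨h1, _⟩, h2⟩
      exact ⟨(hdvd d (by omega)).mp h2, hm0⟩
    · rintro ⟨h1, _⟩
      have hd0 : d ≠ 0 := by rintro rfl; exact hm0 (Nat.eq_zero_of_zero_dvd h1)
      have h2 : d ^ k ∣ n := (hdvd d hd0).mpr h1
      exact ⟨⟨by omega, hD d h2⟩, h2⟩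
  rw [← Finset.sum_filter, hset]
  have hsum : (∑ d ∈ m.divisors, (ArithmeticFunction.moebius d : ℤ)) =
      if m = 1 then 1 else 0 := by
    have h1 : ((ArithmeticFunction.moebius * ArithmeticFunction.zeta :
        ArithmeticFunction ℤ)) m = (1 : ArithmeticFunction ℤ) m := by
      rw [ArithmeticFunction.moebius_mul_coe_zeta]
    rwa [ArithmeticFunction.coe_mul_zeta_apply, ArithmeticFunction.one_apply] at h1
  rw [hsum]
  congr 1
  · -- m = 1 ↔ IsKFree k n  (propext via if-congr)
    apply propext
    constructor
    · intro hm1 p hp hpn hpk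
      have : k ≤ n.factorization p := (Nat.Prime.pow_dvd_iff_le_factorization hp hn0).mp hpk
      have h2 : m.factorization p = 0 := by rw [hm1]; simp
      rw [hfac p] at h2
      have := Nat.div_eq_zero_iff.mp h2
      omega
    · intro hfree
      have hz : m.factorization = 0 := by
        ext q
        rw [hfac q, Finsupp.coe_zero, Pi.zero_apply]
        by_cases hq : q.Prime
        · have : ¬ q ^ k ∣ n := by
            intro hqk
            exact hfree q hq (dvd_trans (dvd_pow_self q (by omega)) hqk) hqk
          rw [Nat.Prime.pow_dvd_iff_le_factorization hq hn0] at this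
          exact Nat.div_eq_of_lt (by omega)
        · rw [Nat.factorization_eq_zero_of_not_prime n hq, Nat.zero_div]
      have := Nat.factorization_prod_pow_eq_self hm0
      rw [hz] at this
      simpa using this.symm

open Finset Real

lemma one_sub_cos_ge {θ : ℝ} (h0 : 0 ≤ θ) (h1 : θ ≤ Real.pi) :
    2 * θ^2 / Real.pi^2 ≤ 1 - Real.cos θ := by
  have hpi : 0 < Real.pi := Real.pi_pos
  have hs : Real.sin (θ/2) ^ 2 = 1/2 - Real.cos θ / 2 := by
    have := Real.sin_sq_eq_half_sub (θ/2)
    rw [this]; ring_nf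
  have hsin : 2 / Real.pi * (θ/2) ≤ Real.sin (θ/2) :=
    Real.mul_le_sin (by linarith) (by linarith)
  have h2 : (θ / Real.pi)^2 ≤ Real.sin (θ/2)^2 := by
    have hθπ : 0 ≤ θ / Real.pi := by positivity
    have : θ / Real.pi ≤ Real.sin (θ/2) := by
      calc θ / Real.pi = 2 / Real.pi * (θ/2) := by ring
        _ ≤ _ := hsin
    nlinarith
  rw [hs] at h2
  have h3 : (θ / Real.pi)^2 = θ^2 / Real.pi^2 := by ring
  rw [h3] at h2
  have h4 : 2 * θ^2 / Real.pi^2 = 2 * (θ^2 / Real.pi^2) := by ring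
  rw [h4]
  linarith

lemma abs_phi_sq (α θ : ℝ) :
    ‖(α : ℂ) * Complex.exp (θ * Complex.I) + (1 - α)‖ ^ 2
      = 1 - 2 * α * (1 - α) * (1 - Real.cos θ) := by
  rw [Complex.sq_norm, Complex.normSq_apply]
  have hre : ((α : ℂ) * Complex.exp (θ * Complex.I) + (1 - α)).re
      = α * Real.cos θ + (1 - α) := by
    simp [Complex.exp_ofReal_mul_I_re, Complex.exp_ofReal_mul_I_im]
  have him : ((α : ℂ) * Complex.exp (θ * Complex.I) + (1 - α)).im
      = α * Real.sin θ := by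
    simp [Complex.exp_ofReal_mul_I_re, Complex.exp_ofReal_mul_I_im]
  rw [hre, him]
  linear_combination (α^2) * Real.sin_sq_add_cos_sq θ

lemma geom_aux {x : ℝ} (h0 : 0 ≤ x) (h1 : x < 1) (M : ℕ) :
    ∑ t ∈ Finset.Ico 1 M, x ^ t ≤ x / (1 - x) := by
  have h1x : 0 < 1 - x := by linarith
  have : ∑ t ∈ Finset.Ico 1 M, x ^ t = x * ∑ t ∈ Finset.range (M - 1), x ^ t := by
    rw [Finset.sum_Ico_eq_sum_range, Finset.mul_sum]
    apply Finset.sum_congr rfl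
    intro t _; rw [pow_add, pow_one]
  rw [this]
  have hg : ∑ t ∈ Finset.range (M - 1), x ^ t ≤ 1 / (1 - x) := by
    have h : x ≠ 1 := ne_of_lt h1
    rw [geom_sum_eq h]
    have hrw : (x ^ (M-1) - 1) / (x - 1) = (1 - x ^ (M-1)) / (1 - x) := by
      rw [div_eq_div_iff (by linarith) (by linarith)]; ring
    rw [hrw, div_le_div_iff₀ h1x h1x]
    have : x ^ (M-1) ≥ 0 := by positivity
    nlinarith
  calc x * ∑ t ∈ Finset.range (M - 1), x ^ t ≤ x * (1 / (1-x)) := by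
        apply mul_le_mul_of_nonneg_left hg h0
    _ = x / (1 - x) := by ring

lemma gsum {τ : ℝ} (hτ : 0 < τ) (M : ℕ) :
    ∑ t ∈ Finset.Ico 1 M, Real.exp (-(τ * (t:ℝ)^2)) ≤ 2 / Real.sqrt τ := by
  have hs : 0 < Real.sqrt τ := Real.sqrt_pos.mpr hτ
  set J : ℕ := ⌊1 / Real.sqrt τ⌋₊ with hJ
  have hJle : (J : ℝ) ≤ 1 / Real.sqrt τ := Nat.floor_le (by positivity)
  rw [← Finset.sum_filter_add_sum_filter_not (Finset.Ico 1 M) (fun t => t ≤ J)]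
  have h1 : ∑ t ∈ (Finset.Ico 1 M).filter (fun t => t ≤ J), Real.exp (-(τ * (t:ℝ)^2))
      ≤ 1 / Real.sqrt τ := by
    calc ∑ t ∈ (Finset.Ico 1 M).filter (fun t => t ≤ J), Real.exp (-(τ * (t:ℝ)^2))
        ≤ ∑ _t ∈ (Finset.Ico 1 M).filter (fun t => t ≤ J), (1:ℝ) := by
          apply Finset.sum_le_sum; intro t _
          rw [Real.exp_le_one_iff]
          have : (0:ℝ) ≤ τ * (t:ℝ)^2 := by positivity
          linarith
      _ = ((Finset.Ico 1 M).filter (fun t => t ≤ J)).card := by simp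
      _ ≤ ((Finset.Icc 1 J).card : ℝ) := by
          have : (Finset.Ico 1 M).filter (fun t => t ≤ J) ⊆ Finset.Icc 1 J := by
            intro t ht
            simp only [Finset.mem_filter, Finset.mem_Ico] at ht
            simp only [Finset.mem_Icc]
            exact ⟨ht.1.1, ht.2⟩
          exact_mod_cast Finset.card_le_card this
      _ = (J : ℝ) := by rw [Nat.card_Icc]; simp
      _ ≤ 1 / Real.sqrt τ := hJle
  have h2 : ∑ t ∈ (Finset.Ico 1 M).filter (fun t => ¬ t ≤ J), Real.exp (-(τ * (t:ℝ)^2))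
      ≤ 1 / Real.sqrt τ := by
    set x : ℝ := Real.exp (-Real.sqrt τ) with hx
    have hx0 : 0 < x := Real.exp_pos _
    have hx1 : x < 1 := by rw [hx, Real.exp_lt_one_iff]; linarith
    have step : ∀ t ∈ (Finset.Ico 1 M).filter (fun t => ¬ t ≤ J),
        Real.exp (-(τ * (t:ℝ)^2)) ≤ x ^ t := by
      intro t ht
      simp only [Finset.mem_filter, Finset.mem_Ico, not_le] at ht
      have htJ : (1 : ℝ) / Real.sqrt τ < t := by
        have := Nat.lt_floor_add_one (1 / Real.sqrt τ)
        have h2 : (J:ℝ) + 1 ≤ (t:ℝ) := by exact_mod_cast Nat.succ_le_of_lt ht.2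
        linarith
      rw [hx, ← Real.exp_nat_mul, Real.exp_le_exp]
      have ht0 : (0:ℝ) < t := by
        have : (0:ℝ) ≤ 1 / Real.sqrt τ := by positivity
        linarith
      have key : Real.sqrt τ * (t:ℝ) ≤ τ * (t:ℝ)^2 := by
        have h3 : 1 ≤ Real.sqrt τ * t := by
          rw [div_lt_iff₀ hs] at htJ; linarith [mul_comm (t:ℝ) (Real.sqrt τ)]
        have h4 : τ = Real.sqrt τ * Real.sqrt τ := (Real.mul_self_sqrt hτ.le).symm
        nlinarith
      linarith
    calc ∑ t ∈ (Finset.Ico 1 M).filter (fun t => ¬ t ≤ J), Real.exp (-(τ * (t:ℝ)^2))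
        ≤ ∑ t ∈ (Finset.Ico 1 M).filter (fun t => ¬ t ≤ J), x ^ t :=
          Finset.sum_le_sum step
      _ ≤ ∑ t ∈ Finset.Ico 1 M, x ^ t := by
          apply Finset.sum_le_sum_of_subset_of_nonneg (Finset.filter_subset _ _)
          intro t _ _; positivity
      _ ≤ x / (1 - x) := geom_aux hx0.le hx1 M
      _ ≤ 1 / Real.sqrt τ := by
          rw [div_le_div_iff₀ (by linarith) hs]
          have := Real.add_one_le_exp (Real.sqrt τ)
          have hxe : x * Real.exp (Real.sqrt τ) = 1 := by
            rw [hx, ← Real.exp_add]; simp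
          nlinarith
  have h3 : (2:ℝ) / Real.sqrt τ = 1 / Real.sqrt τ + 1 / Real.sqrt τ := by ring
  rw [h3]
  exact add_le_add h1 h2

open Finset

lemma root_sum {m : ℕ} (hm : 1 ≤ m) (n : ℕ) :
    ∑ j ∈ Finset.range m, Complex.exp (2 * Real.pi * Complex.I / m) ^ (j * n)
      = if m ∣ n then (m : ℂ) else 0 := by
  classical
  set ζ : ℂ := Complex.exp (2 * Real.pi * Complex.I / m) with hζ
  have hm0 : (m : ℂ) ≠ 0 := Nat.cast_ne_zero.mpr (by omega)
  have hsum : ∀ j, ζ ^ (j * n) = (ζ ^ n) ^ j := by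
    intro j; rw [← pow_mul, Nat.mul_comm]
  have hz1 : ζ ^ n = 1 ↔ m ∣ n := by
    rw [hζ, ← Complex.exp_nat_mul, Complex.exp_eq_one_iff]
    constructor
    · rintro ⟨t, ht⟩
      have h2 : (n : ℂ) * (2 * Real.pi * Complex.I) / m = t * (2 * Real.pi * Complex.I) := by
        rw [← ht]; ring
      have hpi : (2 * Real.pi * Complex.I) ≠ 0 := by
        simp [Complex.I_ne_zero, Real.pi_ne_zero]
      have h4 : (n : ℂ) = t * m := by
        field_simp at h2
        have h2' : (n : ℂ) * (2 * Real.pi * Complex.I) = t * m * (2 * Real.pi * Complex.I) := by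
          linear_combination (2 * Real.pi * Complex.I) * h2
        exact mul_right_cancel₀ hpi h2'
      have h5 : (n : ℤ) = t * m := by exact_mod_cast h4
      exact Int.natCast_dvd_natCast.mp ⟨t, by linarith⟩
    · rintro ⟨t, rfl⟩
      exact ⟨t, by field_simp; push_cast; ring⟩
  by_cases hdvd : m ∣ n
  · simp only [hdvd, if_true]
    have : ∀ j ∈ Finset.range m, ζ ^ (j * n) = 1 := by
      intro j _; rw [hsum j, hz1.mpr hdvd, one_pow]
    rw [Finset.sum_congr rfl this]
    simp
  · simp only [hdvd, if_false]
    have hne : ζ ^ n ≠ 1 := fun h => hdvd (hz1.mp h)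
    calc ∑ j ∈ Finset.range m, ζ ^ (j * n) = ∑ j ∈ Finset.range m, (ζ ^ n) ^ j :=
          Finset.sum_congr rfl (fun j _ => hsum j)
      _ = ((ζ ^ n) ^ m - 1) / (ζ ^ n - 1) := geom_sum_eq hne m
      _ = 0 := by
        have hζm : ζ ^ m = 1 := by
          rw [hζ, ← Complex.exp_nat_mul]
          have : (m : ℂ) * (2 * Real.pi * Complex.I / m) = 2 * Real.pi * Complex.I := by
            field_simp
          rw [this, Complex.exp_two_pi_mul_I]
        have : (ζ ^ n) ^ m = 1 := by
          rw [← pow_mul, Nat.mul_comm, pow_mul, hζm, one_pow]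
        rw [this]
        simp

lemma binom_sum (i : ℕ) (α : ℝ) (z : ℂ) :
    ∑ s ∈ Finset.range (i+1), (((i.choose s : ℝ) * α^s * (1-α)^(i-s) : ℝ) : ℂ) * z^s
      = ((α : ℂ) * z + (1 - α)) ^ i := by
  rw [add_pow]
  apply Finset.sum_congr rfl
  intro s _
  push_cast
  ring

open Finset

noncomputable def zet (m : ℕ) : ℂ := Complex.exp (2 * Real.pi * Complex.I / m)

lemma zet_pow_eq (m t : ℕ) : zet m ^ t = Complex.exp (((2 * Real.pi * t / m : ℝ) : ℂ) * Complex.I) := by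
  rw [zet, ← Complex.exp_nat_mul]
  congr 1
  push_cast
  ring

lemma abs_zet_pow (m t : ℕ) : ‖zet m ^ t‖ = 1 := by
  rw [zet_pow_eq, Complex.norm_exp]
  simp

open scoped Classical in
lemma key_identity {α : ℝ} {i m u c : ℕ} (hm : 1 ≤ m) :
    ((∑ s ∈ Finset.range (i+1), (i.choose s : ℝ) * α^s * (1-α)^(i-s) *
        (if m ∣ u*s+c then (1:ℝ) else 0) : ℝ) : ℂ) - 1/m
      = (1/m) * ∑ j ∈ Finset.Ico 1 m, zet m ^ (j*c) *
          ((α : ℂ) * zet m ^ (j*u) + (1 - α)) ^ i := by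
  have hm0 : (m : ℂ) ≠ 0 := Nat.cast_ne_zero.mpr (by omega)
  have hstep : ∀ n : ℕ, (if m ∣ n then (1:ℂ) else 0)
      = (1/m) * ∑ j ∈ Finset.range m, zet m ^ (j * n) := by
    intro n
    simp only [zet]
    rw [root_sum hm n]
    by_cases h : m ∣ n <;> simp [h, hm0]
  have main : ((∑ s ∈ Finset.range (i+1), (i.choose s : ℝ) * α^s * (1-α)^(i-s) *
      (if m ∣ u*s+c then (1:ℝ) else 0) : ℝ) : ℂ)
      = (1/m) * ∑ j ∈ Finset.range m, zet m ^ (j*c) *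
          ((α : ℂ) * zet m ^ (j*u) + (1 - α)) ^ i := by
    push_cast
    simp only [apply_ite (Complex.ofReal), Complex.ofReal_one, Complex.ofReal_zero]
    calc ∑ s ∈ Finset.range (i+1), (i.choose s : ℂ) * (α:ℂ)^s * (1-(α:ℂ))^(i-s) *
          (if m ∣ u*s+c then (1:ℂ) else 0)
        = ∑ s ∈ Finset.range (i+1), ((1:ℂ)/m) * ∑ j ∈ Finset.range m,
            ((i.choose s : ℂ) * (α:ℂ)^s * (1-(α:ℂ))^(i-s)) * zet m ^ (j*(u*s+c)) := by
          apply Finset.sum_congr rfl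
          intro s _
          rw [hstep (u*s+c)]
          simp only [Finset.mul_sum]
          exact Finset.sum_congr rfl (fun j _ => by ring)
      _ = ((1:ℂ)/m) * ∑ j ∈ Finset.range m, ∑ s ∈ Finset.range (i+1),
            ((i.choose s : ℂ) * (α:ℂ)^s * (1-(α:ℂ))^(i-s)) * zet m ^ (j*(u*s+c)) := by
          rw [← Finset.mul_sum, Finset.sum_comm]
      _ = ((1:ℂ)/m) * ∑ j ∈ Finset.range m, zet m ^ (j*c) *
            ((α : ℂ) * zet m ^ (j*u) + (1 - α)) ^ i := by
          congr 1
          apply Finset.sum_congr rfl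
          intro j _
          rw [← binom_sum i α (zet m ^ (j*u)), Finset.mul_sum]
          apply Finset.sum_congr rfl
          intro s _
          have hpow : zet m ^ (j*(u*s+c)) = zet m ^ (j*c) * (zet m ^ (j*u))^s := by
            rw [← pow_mul, ← pow_add]
            congr 1
            ring
          rw [hpow]
          push_cast
          ring
  rw [main]
  have h0 : Finset.range m = insert 0 (Finset.Ico 1 m) := by
    ext j
    simp only [Finset.mem_range, Finset.mem_insert, Finset.mem_Ico]
    omega
  rw [h0, Finset.sum_insert (by simp)]
  have : zet m ^ (0*c) * ((α : ℂ) * zet m ^ (0*u) + (1 - α)) ^ i = 1 := by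
    simp
  rw [this]
  ring

lemma zet_pow_self {m : ℕ} (hm : 1 ≤ m) : zet m ^ m = 1 := by
  rw [zet, ← Complex.exp_nat_mul]
  have hm0 : (m : ℂ) ≠ 0 := Nat.cast_ne_zero.mpr (by omega)
  have : (m : ℂ) * (2 * Real.pi * Complex.I / m) = 2 * Real.pi * Complex.I := by
    field_simp
  rw [this, Complex.exp_two_pi_mul_I]

lemma zet_pow_mod {m : ℕ} (hm : 1 ≤ m) (n : ℕ) : zet m ^ n = zet m ^ (n % m) := by
  conv_lhs => rw [← Nat.div_add_mod n m]
  rw [pow_add, pow_mul, zet_pow_self hm, one_pow, one_mul]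

lemma phi_bound {α : ℝ} (hα0 : 0 < α) (hα1 : α < 1) {m t : ℕ} (i : ℕ)
    (h1 : 1 ≤ t) (h2 : t < m) :
    ‖(α : ℂ) * zet m ^ t + (1 - α)‖ ^ i
      ≤ Real.exp (-(α*(1-α)*i/(m:ℝ)^2 * ((min t (m - t) : ℕ):ℝ)^2)) := by
  have hm1 : 1 ≤ m := by omega
  have hmR : (0:ℝ) < m := by exact_mod_cast (by omega : 0 < m)
  set β := α * (1-α) with hβ
  have hβ0 : 0 < β := by nlinarith
  set t' : ℕ := min t (m - t) with ht'
  set θ' : ℝ := 2 * Real.pi * t' / m with hθ'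
  have hπ : 0 < Real.pi := Real.pi_pos
  have ht'm : 2 * t' ≤ m := by omega
  have hθ'0 : 0 ≤ θ' := by positivity
  have hθ'π : θ' ≤ Real.pi := by
    rw [hθ', div_le_iff₀ hmR]
    have : (2 * t' : ℝ) ≤ m := by exact_mod_cast ht'm
    nlinarith
  have hcos : Real.cos (2 * Real.pi * t / m) = Real.cos θ' := by
    rcases le_or_gt t (m - t) with h | h
    · have : t' = t := by omega
      rw [hθ', this]
    · have ht'e : t' = m - t := by omega
      have harg : 2 * Real.pi * t / m = 2 * Real.pi - θ' := by
        rw [hθ', ht'e]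
        have : ((m - t : ℕ) : ℝ) = (m : ℝ) - t := by
          have : t ≤ m := by omega
          push_cast [this]; ring
        rw [this]
        field_simp
        ring
      rw [harg, Real.cos_two_pi_sub]
  have hA2 : ‖(α : ℂ) * zet m ^ t + (1 - α)‖ ^ 2
      = 1 - 2 * β * (1 - Real.cos θ') := by
    rw [zet_pow_eq]
    rw [abs_phi_sq α (2 * Real.pi * t / m)]
    rw [hcos, hβ]
    ring
  have hlow : 2 * θ'^2 / Real.pi^2 ≤ 1 - Real.cos θ' := one_sub_cos_ge hθ'0 hθ'π
  have hθsq : 2 * θ'^2 / Real.pi^2 = 8 * (t':ℝ)^2 / (m:ℝ)^2 := by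
    rw [hθ']
    field_simp
    ring
  -- A² ≤ exp(-(16 β t'²/m²))
  have hA2le : ‖(α : ℂ) * zet m ^ t + (1 - α)‖ ^ 2
      ≤ Real.exp (-(16 * β * (t':ℝ)^2 / (m:ℝ)^2)) := by
    rw [hA2]
    have h16 : 16 * β * (t':ℝ)^2 / (m:ℝ)^2 ≤ 2 * β * (1 - Real.cos θ') := by
      rw [hθsq] at hlow
      have : 8 * (t':ℝ)^2 / (m:ℝ)^2 * (2 * β) ≤ (1 - Real.cos θ') * (2 * β) := by
        apply mul_le_mul_of_nonneg_right hlow (by linarith)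
      calc 16 * β * (t':ℝ)^2 / (m:ℝ)^2 = 8 * (t':ℝ)^2 / (m:ℝ)^2 * (2*β) := by ring
        _ ≤ (1 - Real.cos θ') * (2*β) := this
        _ = 2 * β * (1 - Real.cos θ') := by ring
    calc 1 - 2*β*(1 - Real.cos θ') ≤ 1 - 16 * β * (t':ℝ)^2 / (m:ℝ)^2 := by linarith
      _ ≤ Real.exp (-(16 * β * (t':ℝ)^2 / (m:ℝ)^2)) := by
          have := Real.add_one_le_exp (-(16 * β * (t':ℝ)^2 / (m:ℝ)^2))
          linarith
  have hAle : ‖(α : ℂ) * zet m ^ t + (1 - α)‖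
      ≤ Real.exp (-(8 * β * (t':ℝ)^2 / (m:ℝ)^2)) := by
    have hexp : Real.exp (-(8 * β * (t':ℝ)^2 / (m:ℝ)^2)) ^ 2
        = Real.exp (-(16 * β * (t':ℝ)^2 / (m:ℝ)^2)) := by
      rw [← Real.exp_nat_mul]
      congr 1
      push_cast
      ring
    have h0 : (0:ℝ) ≤ ‖(α : ℂ) * zet m ^ t + (1 - α)‖ := norm_nonneg _
    nlinarith [hA2le, Real.exp_pos (-(8 * β * (t':ℝ)^2 / (m:ℝ)^2))]
  calc ‖(α : ℂ) * zet m ^ t + (1 - α)‖ ^ i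
      ≤ Real.exp (-(8 * β * (t':ℝ)^2 / (m:ℝ)^2)) ^ i :=
        pow_le_pow_left₀ (norm_nonneg _) hAle i
    _ = Real.exp (-(8 * β * (t':ℝ)^2 / (m:ℝ)^2) * i) := by
        rw [← Real.exp_nat_mul]; congr 1; ring
    _ ≤ Real.exp (-(β * i / (m:ℝ)^2 * (t':ℝ)^2)) := by
        rw [Real.exp_le_exp]
        have hi0 : (0:ℝ) ≤ i := Nat.cast_nonneg i
        have : β * i / (m:ℝ)^2 * (t':ℝ)^2 ≤ 8 * β * (t':ℝ)^2 / (m:ℝ)^2 * i := by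
          rw [div_mul_eq_mul_div, div_mul_eq_mul_div, div_le_div_iff₀ (by positivity) (by positivity)]
          have hnn : (0:ℝ) ≤ β * i * (t':ℝ)^2 * (m:ℝ)^2 := by positivity
          nlinarith [hnn]
        linarith

open scoped Classical in
lemma key_est {α : ℝ} (hα0 : 0 < α) (hα1 : α < 1) {i m u c : ℕ} (hi : 1 ≤ i) (hm : 1 ≤ m)
    (hcop : Nat.gcd u m = 1) :
    |(∑ s ∈ Finset.range (i+1), (i.choose s : ℝ) * α^s * (1-α)^(i-s) *
        (if m ∣ u*s+c then (1:ℝ) else 0)) - 1/m|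
      ≤ 4 / Real.sqrt (α*(1-α)*i) := by
  set β := α * (1-α) with hβ
  have hβ0 : 0 < β := by nlinarith
  have hiR : (0:ℝ) < i := by exact_mod_cast (by omega : 0 < i)
  have hmR : (0:ℝ) < m := by exact_mod_cast (by omega : 0 < m)
  set τ : ℝ := β * i / (m:ℝ)^2 with hτ
  have hτ0 : 0 < τ := by positivity
  set T : ℝ := ∑ s ∈ Finset.range (i+1), (i.choose s : ℝ) * α^s * (1-α)^(i-s) *
      (if m ∣ u*s+c then (1:ℝ) else 0) with hT
  have hcast : ((T - 1/m : ℝ) : ℂ) = (1/m) * ∑ j ∈ Finset.Ico 1 m, zet m ^ (j*c) *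
      ((α : ℂ) * zet m ^ (j*u) + (1 - α)) ^ i := by
    rw [Complex.ofReal_sub, ← key_identity (α := α) (i := i) (u := u) (c := c) hm, hT]
    push_cast
    ring
  have habs : |T - 1/m| = ‖((T - 1/m : ℝ) : ℂ)‖ := by rw [Complex.norm_real, Real.norm_eq_abs]
  rw [habs, hcast]
  -- bound
  have step1 : ‖(1/(m:ℂ)) * ∑ j ∈ Finset.Ico 1 m, zet m ^ (j*c) *
      ((α : ℂ) * zet m ^ (j*u) + (1 - α)) ^ i‖
      ≤ (1/(m:ℝ)) * ∑ j ∈ Finset.Ico 1 m,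
          Real.exp (-(τ * ((min ((j*u) % m) (m - (j*u) % m) : ℕ):ℝ)^2)) := by
    rw [norm_mul]
    have h1m : ‖1/(m:ℂ)‖ = 1/(m:ℝ) := by
      rw [norm_div, norm_one, Complex.norm_natCast]
    rw [h1m]
    apply mul_le_mul_of_nonneg_left _ (by positivity)
    calc ‖∑ j ∈ Finset.Ico 1 m, zet m ^ (j*c) *
          ((α : ℂ) * zet m ^ (j*u) + (1 - α)) ^ i‖
        ≤ ∑ j ∈ Finset.Ico 1 m, ‖zet m ^ (j*c) *
            ((α : ℂ) * zet m ^ (j*u) + (1 - α)) ^ i‖ :=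
          norm_sum_le _ _
      _ ≤ ∑ j ∈ Finset.Ico 1 m,
            Real.exp (-(τ * ((min ((j*u) % m) (m - (j*u) % m) : ℕ):ℝ)^2)) := by
          apply Finset.sum_le_sum
          intro j hj
          simp only [Finset.mem_Ico] at hj
          rw [norm_mul, abs_zet_pow, one_mul, norm_pow]
          set t : ℕ := (j*u) % m with ht
          have htlt : t < m := Nat.mod_lt _ (by omega)
          have ht1 : 1 ≤ t := by
            rcases Nat.eq_zero_or_pos t with h0 | h0
            · exfalso
              have hdvd : m ∣ j * u := Nat.dvd_of_mod_eq_zero h0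
              have hc : Nat.Coprime m u := Nat.coprime_comm.mp hcop
              have : m ∣ j := (Nat.Coprime.dvd_of_dvd_mul_right hc) hdvd
              have := Nat.le_of_dvd (by omega) this
              omega
            · exact h0
          have hzz : zet m ^ (j*u) = zet m ^ t := zet_pow_mod (by omega) (j*u)
          rw [hzz]
          have := phi_bound hα0 hα1 i ht1 htlt
          calc ‖(α : ℂ) * zet m ^ t + (1 - α)‖ ^ i
              ≤ Real.exp (-(β*i/(m:ℝ)^2 * ((min t (m - t) : ℕ):ℝ)^2)) := this
            _ = Real.exp (-(τ * ((min t (m - t) : ℕ):ℝ)^2)) := by rw [hτ]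
  refine le_trans step1 ?_
  -- reindex: sum over j of g(t j) ≤ sum over t of g t
  set g : ℕ → ℝ := fun t => Real.exp (-(τ * ((min t (m - t) : ℕ):ℝ)^2)) with hg
  have hg0 : ∀ t, 0 ≤ g t := fun t => (Real.exp_pos _).le
  have hinj : ∀ x ∈ Finset.Ico 1 m, ∀ y ∈ Finset.Ico 1 m,
      (fun j => (j * u) % m) x = (fun j => (j * u) % m) y → x = y := by
    intro x hx y hy hxy
    simp only [Finset.mem_Ico] at hx hy
    simp only at hxy
    have hc : Nat.Coprime u m := hcop
    have hmod : x % m = y % m := by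
      have h1 : x * u ≡ y * u [MOD m] := by
        unfold Nat.ModEq
        exact hxy
      have := Nat.ModEq.cancel_right_of_coprime (by rw [Nat.gcd_comm]; exact hcop) h1
      exact this
    rw [Nat.mod_eq_of_lt hx.2, Nat.mod_eq_of_lt hy.2] at hmod
    exact hmod
  have hre : ∑ j ∈ Finset.Ico 1 m, g ((j*u) % m) ≤ ∑ t ∈ Finset.Ico 1 m, g t := by
    rw [← Finset.sum_image hinj]
    apply Finset.sum_le_sum_of_subset_of_nonneg
    · intro t ht
      simp only [Finset.mem_image] at ht
      obtain ⟨j, hj, rfl⟩ := ht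
      simp only [Finset.mem_Ico] at hj ⊢
      constructor
      · rcases Nat.eq_zero_or_pos ((j*u) % m) with h0 | h0
        · exfalso
          have hdvd : m ∣ j * u := Nat.dvd_of_mod_eq_zero h0
          have hc : Nat.Coprime m u := Nat.coprime_comm.mp hcop
          have hmj : m ∣ j := (Nat.Coprime.dvd_of_dvd_mul_right hc) hdvd
          have := Nat.le_of_dvd (by omega) hmj
          omega
        · exact h0
      · exact Nat.mod_lt _ (by omega)
    · intro t _ _; exact hg0 t
  have hsplit : ∑ t ∈ Finset.Ico 1 m, g t
      ≤ ∑ t ∈ Finset.Ico 1 m, (Real.exp (-(τ * (t:ℝ)^2))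
          + Real.exp (-(τ * (((m - t:ℕ)):ℝ)^2))) := by
    apply Finset.sum_le_sum
    intro t ht
    rcases le_or_gt t (m - t) with h | h
    · have : min t (m - t) = t := min_eq_left h
      rw [hg]
      simp only [this]
      have := (Real.exp_pos (-(τ * (((m - t:ℕ)):ℝ)^2))).le
      linarith
    · have : min t (m - t) = m - t := min_eq_right h.le
      rw [hg]
      simp only [this]
      have := (Real.exp_pos (-(τ * ((t:ℕ):ℝ)^2))).le
      linarith
  have hswap : ∑ t ∈ Finset.Ico 1 m, Real.exp (-(τ * (((m - t:ℕ)):ℝ)^2))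
      = ∑ t ∈ Finset.Ico 1 m, Real.exp (-(τ * (t:ℝ)^2)) := by
    apply Finset.sum_nbij' (fun t => m - t) (fun t => m - t)
    · intro t ht; simp only [Finset.mem_Ico] at ht ⊢; omega
    · intro t ht; simp only [Finset.mem_Ico] at ht ⊢; omega
    · intro t ht; simp only [Finset.mem_Ico] at ht; omega
    · intro t ht; simp only [Finset.mem_Ico] at ht; omega
    · intro t ht; rfl
  have hgsum := gsum hτ0 m
  have hfinal : (1/(m:ℝ)) * ∑ j ∈ Finset.Ico 1 m, g ((j*u) % m) ≤ 4 / Real.sqrt (β * i) := by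
    have hb : ∑ j ∈ Finset.Ico 1 m, g ((j*u) % m) ≤ 4 / Real.sqrt τ := by
      calc ∑ j ∈ Finset.Ico 1 m, g ((j*u) % m) ≤ ∑ t ∈ Finset.Ico 1 m, g t := hre
        _ ≤ _ := hsplit
        _ = ∑ t ∈ Finset.Ico 1 m, Real.exp (-(τ * (t:ℝ)^2))
            + ∑ t ∈ Finset.Ico 1 m, Real.exp (-(τ * (((m - t:ℕ)):ℝ)^2)) :=
            Finset.sum_add_distrib
        _ = 2 * ∑ t ∈ Finset.Ico 1 m, Real.exp (-(τ * (t:ℝ)^2)) := by rw [hswap]; ring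
        _ ≤ 2 * (2 / Real.sqrt τ) := by linarith
        _ = 4 / Real.sqrt τ := by ring
    have hsqrtτ : Real.sqrt τ = Real.sqrt (β * i) / m := by
      rw [hτ, Real.sqrt_div (by positivity : (0:ℝ) ≤ β * i), Real.sqrt_sq hmR.le]
    rw [hsqrtτ] at hb
    calc (1/(m:ℝ)) * ∑ j ∈ Finset.Ico 1 m, g ((j*u) % m)
        ≤ (1/(m:ℝ)) * (4 / (Real.sqrt (β * i) / m)) := by
          apply mul_le_mul_of_nonneg_left hb (by positivity)
      _ = 4 / Real.sqrt (β * i) := by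
          have hsq : 0 < Real.sqrt (β * i) := Real.sqrt_pos.mpr (by positivity)
          field_simp
  exact hfinal

open MeasureTheory ProbabilityTheory Finset

lemma binom_pmf {Ω : Type*} [MeasurableSpace Ω] (μ' : Measure Ω) [IsProbabilityMeasure μ']
    {α : ℝ} (hα0 : 0 ≤ α) (hα1 : α ≤ 1)
    (Y : ℕ → Ω → ℕ) (hYle : ∀ j ω, Y j ω ≤ 1) (hYmeas : ∀ j, Measurable (Y j))
    (hindep : iIndepFun Y μ')
    (hY1 : ∀ j, μ' {ω | Y j ω = 1} = ENNReal.ofReal α) :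
    ∀ i s, μ' {ω | (∑ j ∈ Finset.range i, Y j ω) = s}
      = ENNReal.ofReal ((i.choose s : ℝ) * α^s * (1-α)^(i-s)) := by
  have hY0 : ∀ j, μ' {ω | Y j ω = 0} = ENNReal.ofReal (1 - α) := by
    intro j
    have hc : {ω | Y j ω = 0} = {ω | Y j ω = 1}ᶜ := by
      ext ω; simp only [Set.mem_setOf_eq, Set.mem_compl_iff]
      have := hYle j ω; omega
    have hms : MeasurableSet {ω | Y j ω = 1} := hYmeas j (measurableSet_singleton 1)
    rw [hc, measure_compl hms (measure_ne_top _ _),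
      measure_univ, hY1 j, ENNReal.ofReal_sub 1 hα0, ENNReal.ofReal_one]
  have h1α : (0:ℝ) ≤ 1 - α := by linarith
  have hnn : ∀ (n s : ℕ), (0:ℝ) ≤ (n.choose s : ℝ) * α^s * (1-α)^(n-s) := fun n s =>
    mul_nonneg (mul_nonneg (Nat.cast_nonneg _) (pow_nonneg hα0 _)) (pow_nonneg h1α _)
  intro i
  induction i with
  | zero =>
    intro s
    rcases Nat.eq_zero_or_pos s with rfl | hs
    · have h1 : {ω : Ω | (∑ j ∈ Finset.range 0, Y j ω) = 0} = Set.univ := by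
        ext ω; simp
      rw [h1, measure_univ]
      simp
    · have h1 : {ω : Ω | (∑ j ∈ Finset.range 0, Y j ω) = s} = ∅ := by
        ext ω; simp; omega
      rw [h1, measure_empty, Nat.choose_eq_zero_of_lt (by omega)]
      simp
  | succ i ih =>
    intro s
    have hSmeas : Measurable (fun ω => ∑ j ∈ Finset.range i, Y j ω) := by
      apply Finset.measurable_sum
      intro j _; exact hYmeas j
    have hIndep : IndepFun (fun ω => ∑ j ∈ Finset.range i, Y j ω) (Y i) μ' := by
      have h := hindep.indepFun_finsetSum_of_notMem hYmeas
        (by simp : i ∉ Finset.range i)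
      have hfun : (fun ω => ∑ j ∈ Finset.range i, Y j ω)
          = ∑ j ∈ Finset.range i, Y j := by
        ext ω; rw [Finset.sum_apply]
      rw [hfun]
      exact h
    have hmul : ∀ t v : ℕ, μ' ({ω | (∑ j ∈ Finset.range i, Y j ω) = t} ∩ {ω | Y i ω = v})
        = μ' {ω | (∑ j ∈ Finset.range i, Y j ω) = t} * μ' {ω | Y i ω = v} := by
      intro t v
      have := hIndep.measure_inter_preimage_eq_mul {t} {v}
        (measurableSet_singleton t) (measurableSet_singleton v)
      simpa [Set.preimage] using this
    have hsplit : ∀ ω, (∑ j ∈ Finset.range (i+1), Y j ω)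
        = (∑ j ∈ Finset.range i, Y j ω) + Y i ω := by
      intro ω; rw [Finset.sum_range_succ]
    rcases Nat.eq_zero_or_pos s with rfl | hs
    · -- s = 0
      have hE : {ω | (∑ j ∈ Finset.range (i+1), Y j ω) = 0}
          = {ω | (∑ j ∈ Finset.range i, Y j ω) = 0} ∩ {ω | Y i ω = 0} := by
        ext ω
        simp only [Set.mem_setOf_eq, Set.mem_inter_iff, hsplit ω]
        omega
      rw [hE, hmul 0 0, ih 0, hY0 i, ← ENNReal.ofReal_mul (hnn i 0)]
      congr 1
      simp [pow_succ]
    · -- s ≥ 1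
      obtain ⟨t, rfl⟩ : ∃ t, s = t + 1 := ⟨s - 1, by omega⟩
      have hE : {ω | (∑ j ∈ Finset.range (i+1), Y j ω) = t+1}
          = ({ω | (∑ j ∈ Finset.range i, Y j ω) = t+1} ∩ {ω | Y i ω = 0})
            ∪ ({ω | (∑ j ∈ Finset.range i, Y j ω) = t} ∩ {ω | Y i ω = 1}) := by
        ext ω
        simp only [Set.mem_setOf_eq, Set.mem_inter_iff, Set.mem_union, hsplit ω]
        have := hYle i ω
        omega
      have hdisj : Disjoint
          ({ω | (∑ j ∈ Finset.range i, Y j ω) = t+1} ∩ {ω | Y i ω = 0})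
          ({ω | (∑ j ∈ Finset.range i, Y j ω) = t} ∩ {ω | Y i ω = 1}) := by
        apply Set.disjoint_left.mpr
        rintro ω ⟨h1, h2⟩ ⟨h3, h4⟩
        simp only [Set.mem_setOf_eq] at h2 h4
        omega
      have hmeas2 : MeasurableSet ({ω | (∑ j ∈ Finset.range i, Y j ω) = t} ∩ {ω | Y i ω = 1}) :=
        (hSmeas (measurableSet_singleton t)).inter ((hYmeas i) (measurableSet_singleton 1))
      rw [hE, measure_union hdisj hmeas2, hmul (t+1) 0, hmul t 1, ih (t+1), ih t,
        hY0 i, hY1 i, ← ENNReal.ofReal_mul (hnn i (t+1)), ← ENNReal.ofReal_mul (hnn i t),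
        ← ENNReal.ofReal_add (mul_nonneg (hnn i (t+1)) h1α) (mul_nonneg (hnn i t) hα0)]
      congr 1
      rcases le_or_gt (t+1) i with hle | hgt
      · have h1 : i - t = (i - (t+1)) + 1 := by omega
        have h2 : (i+1) - (t+1) = i - t := by omega
        rw [Nat.choose_succ_succ i t, h2, h1]
        push_cast
        ring
      · rcases Nat.lt_succ_iff_lt_or_eq.mp hgt with hlt | heq
        · rw [Nat.choose_eq_zero_of_lt (by omega : i + 1 < t + 1),
            Nat.choose_eq_zero_of_lt (by omega : i < t + 1),
            Nat.choose_eq_zero_of_lt (by omega : i < t)]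
          push_cast
          ring
        · subst heq
          rw [Nat.choose_self, Nat.choose_self, Nat.choose_eq_zero_of_lt (by omega : i < i + 1)]
          have h2 : (i+1) - (i+1) = 0 := by omega
          have h3 : i - (i+1) = 0 := by omega
          have h4 : i - i = 0 := by omega
          rw [h2, h3, h4]
          push_cast
          ring

open MeasureTheory ProbabilityTheory Finset


open scoped Classical in
lemma exp_formula {Ω : Type*} [MeasurableSpace Ω] (μ' : Measure Ω) [IsProbabilityMeasure μ']
    (k a b r : ℕ) (hb : 1 ≤ b) (hab : b < a)
    (α : ℝ) (hα : α ∈ Set.Ioo (0:ℝ) 1)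
    (W : ℕ → Ω → ℕ) (hWmeas : ∀ i, Measurable (W i))
    (hindep : iIndepFun W μ')
    (hWa : ∀ i, μ' {ω | W i ω = a} = ENNReal.ofReal α)
    (hWb : ∀ i, μ' {ω | W i ω = b} = ENNReal.ofReal (1 - α))
    (P : ℕ → Ω → ℕ) (hP : ∀ i ω, P i ω = r + ∑ j ∈ Finset.range i, W j ω)
    (X : ℕ → Ω → ℝ) (hX : ∀ i ω, X i ω = if IsKFree k (P i ω) then 1 else 0)
    (i : ℕ) :
    ∫ ω, X i ω ∂μ' = ∑ s ∈ Finset.range (i+1),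
      (i.choose s : ℝ) * α^s * (1-α)^(i-s) *
        (if IsKFree k (b*i + r + (a-b)*s) then (1:ℝ) else 0) := by
  obtain ⟨hα0, hα1⟩ := hα
  have h1α : (0:ℝ) ≤ 1 - α := by linarith
  set Y : ℕ → Ω → ℕ := fun j ω => if W j ω = a then 1 else 0 with hY
  have hYle : ∀ j ω, Y j ω ≤ 1 := by intro j ω; rw [hY]; dsimp; split <;> omega
  have hYmeas : ∀ j, Measurable (Y j) := by
    intro j
    exact (measurable_from_top (f := fun n : ℕ => if n = a then (1:ℕ) else 0)).comp (hWmeas j)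
  have hYindep : iIndepFun Y μ' :=
    hindep.comp (fun _ n => if n = a then 1 else 0) (fun _ => measurable_from_top)
  have hY1 : ∀ j, μ' {ω | Y j ω = 1} = ENNReal.ofReal α := by
    intro j
    have hset : {ω | Y j ω = 1} = {ω | W j ω = a} := by
      ext ω; rw [hY]; dsimp; split <;> simp_all
    rw [hset, hWa j]
  have hpmf := binom_pmf μ' hα0.le hα1.le Y hYle hYmeas hYindep hY1
  set N : Ω → ℕ := fun ω => ∑ j ∈ Finset.range i, Y j ω with hN
  have hNmeas : Measurable N := Finset.measurable_sum _ (fun j _ => hYmeas j)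
  have hNle : ∀ ω, N ω ≤ i := by
    intro ω
    rw [hN]
    calc ∑ j ∈ Finset.range i, Y j ω ≤ ∑ _j ∈ Finset.range i, 1 :=
          Finset.sum_le_sum (fun j _ => hYle j ω)
      _ = i := by simp
  -- a.e. event
  have hae : ∀ᵐ ω ∂μ', ∀ j, W j ω = a ∨ W j ω = b := by
    rw [ae_all_iff]
    intro j
    rw [ae_iff]
    have hd : Disjoint {ω | W j ω = a} {ω | W j ω = b} := by
      apply Set.disjoint_left.mpr
      intro ω h1 h2
      simp only [Set.mem_setOf_eq] at h1 h2
      omega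
    have hmb : MeasurableSet {ω | W j ω = b} := hWmeas j (measurableSet_singleton b)
    have hma : MeasurableSet {ω | W j ω = a} := hWmeas j (measurableSet_singleton a)
    have hu : μ' ({ω | W j ω = a} ∪ {ω | W j ω = b}) = 1 := by
      rw [measure_union hd hmb, hWa j, hWb j,
        ← ENNReal.ofReal_add hα0.le h1α]
      simp
    have hce : {ω | ¬(W j ω = a ∨ W j ω = b)} = ({ω | W j ω = a} ∪ {ω | W j ω = b})ᶜ := by
      ext ω; simp [Set.mem_union, Set.mem_setOf_eq]
    rw [hce, measure_compl (hma.union hmb) (measure_ne_top _ _), measure_univ, hu, tsub_self]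
  set F : ℕ → ℝ := fun s => if IsKFree k (b*i + r + (a-b)*s) then (1:ℝ) else 0 with hF
  have hXF : ∀ᵐ ω ∂μ', X i ω = F (N ω) := by
    filter_upwards [hae] with ω hω
    have hterm : ∀ j ∈ Finset.range i, W j ω = b + (a-b) * Y j ω := by
      intro j _
      rcases hω j with h | h
      · rw [hY]; dsimp; rw [h, if_pos rfl]; omega
      · rw [hY]; dsimp; rw [h, if_neg (by omega)]; omega
    have hsum : ∑ j ∈ Finset.range i, W j ω = b * i + (a-b) * N ω := by
      rw [Finset.sum_congr rfl hterm, Finset.sum_add_distrib, Finset.sum_const,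
        ← Finset.mul_sum, hN]
      simp [Nat.mul_comm]
    have harg : r + ∑ j ∈ Finset.range i, W j ω = b*i + r + (a-b) * N ω := by
      rw [hsum]; ring
    rw [hX, hP, harg, hF]
  rw [integral_congr_ae hXF]
  have hpt : ∀ ω, F (N ω) = ∑ s ∈ Finset.range (i+1), if N ω = s then F s else 0 := by
    intro ω
    rw [Finset.sum_ite_eq (Finset.range (i+1)) (N ω) F,
      if_pos (Finset.mem_range.mpr (by have := hNle ω; omega))]
  rw [show (fun ω => F (N ω)) = fun ω => ∑ s ∈ Finset.range (i+1), if N ω = s then F s else 0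
    from funext hpt]
  have hint : ∀ s, (fun ω => if N ω = s then F s else 0)
      = Set.indicator {ω | N ω = s} (fun _ => F s) := by
    intro s
    ext ω
    rw [Set.indicator_apply]
    simp only [Set.mem_setOf_eq]
  have hmeasS : ∀ s, MeasurableSet {ω | N ω = s} :=
    fun s => hNmeas (measurableSet_singleton s)
  rw [integral_finset_sum]
  · apply Finset.sum_congr rfl
    intro s _
    rw [show (fun ω => if N ω = s then F s else 0) = Set.indicator {ω | N ω = s} (fun _ => F s)
      from hint s]
    rw [integral_indicator_const (F s) (hmeasS s), measureReal_def, hpmf i s,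
      ENNReal.toReal_ofReal (by
        exact mul_nonneg (mul_nonneg (Nat.cast_nonneg _) (pow_nonneg hα0.le _))
          (pow_nonneg h1α _))]
    rw [smul_eq_mul, mul_comm]
  · intro s _
    rw [hint s]
    exact (integrable_const (F s)).indicator (hmeasS s)

open Finset


open scoped Classical

open scoped Classical in
lemma det_est (k a b r i : ℕ) (hk : 2 ≤ k) (hb : 1 ≤ b) (hab : b < a) (hi : 1 ≤ i)
    {α : ℝ} (hα0 : 0 < α) (hα1 : α < 1) :
    |(∑ s ∈ Finset.range (i+1), (i.choose s : ℝ) * α^s * (1-α)^(i-s) *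
        (if IsKFree k (b*i + r + (a-b)*s) then (1:ℝ) else 0))
      - ∑ d ∈ (Finset.Icc 1 ⌊((a * i + r : ℕ) : ℝ) ^ ((1 : ℝ) / k)⌋₊).filter
          (fun d => Nat.gcd (a - b) (d ^ k) ∣ b * i + r),
        (ArithmeticFunction.moebius d : ℝ) * Nat.gcd (a - b) (d ^ k) / (d : ℝ) ^ k|
      ≤ (4 * (a + r)) * (i : ℝ) ^ ((1 : ℝ) / k - 1 / 2) / Real.sqrt (α * (1 - α)) := by
  have h1α : (0:ℝ) ≤ 1 - α := by linarith
  set β : ℝ := α * (1 - α) with hβ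
  have hβ0 : 0 < β := by nlinarith
  have hiR : (0:ℝ) < i := by exact_mod_cast (by omega : 0 < i)
  set D : ℕ := ⌊((a * i + r : ℕ) : ℝ) ^ ((1 : ℝ) / k)⌋₊ with hD
  set p : ℕ → ℝ := fun s => (i.choose s : ℝ) * α^s * (1-α)^(i-s) with hp
  set n : ℕ → ℕ := fun s => b*i + r + (a-b)*s with hn
  -- basic facts
  have hn1 : ∀ s, 1 ≤ n s := by intro s; rw [hn]; dsimp; nlinarith [Nat.zero_le ((a-b)*s)]
  have hnle : ∀ s, s ≤ i → n s ≤ a * i + r := by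
    intro s hs
    rw [hn]; dsimp
    have h1 : (a-b)*s ≤ (a-b)*i := Nat.mul_le_mul_left _ hs
    have h2 : b*i + (a-b)*i = a*i := by
      have : b ≤ a := le_of_lt hab
      rw [← Nat.add_mul]
      congr 1
      omega
    omega
  have hDb : ∀ s, s ≤ i → ∀ d, d ^ k ∣ n s → d ≤ D := by
    intro s hs d hd
    have hd0 : d ≠ 0 := by
      rintro rfl
      rw [zero_pow (by omega)] at hd
      have := Nat.eq_zero_of_zero_dvd hd
      have := hn1 s
      omega
    have hdk : d ^ k ≤ n s := Nat.le_of_dvd (hn1 s) hd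
    have hdk2 : (d:ℝ) ^ (k:ℕ) ≤ ((a*i+r : ℕ) : ℝ) := by
      have : d ^ k ≤ a*i+r := le_trans hdk (hnle s hs)
      exact_mod_cast this
    rw [hD]
    apply Nat.le_floor
    have hdr : (d : ℝ) = ((d:ℝ) ^ (k:ℕ)) ^ ((1:ℝ)/k) := by
      rw [← Real.rpow_natCast (d:ℝ) k, ← Real.rpow_mul (Nat.cast_nonneg d)]
      rw [mul_one_div, div_self (by positivity : (k:ℝ) ≠ 0), Real.rpow_one]
    rw [hdr]
    exact Real.rpow_le_rpow (by positivity) hdk2 (by positivity)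
  -- step 2: expand indicator
  have hFexp : ∀ s, s ≤ i → (if IsKFree k (n s) then (1:ℝ) else 0)
      = ∑ d ∈ Finset.Icc 1 D, (if d ^ k ∣ n s then (ArithmeticFunction.moebius d : ℝ) else 0) := by
    intro s hs
    have := sum_moebius_isKFree (by omega : 1 ≤ k) (hn1 s) (hDb s hs)
    have hcast := congrArg (fun z : ℤ => (z : ℝ)) this
    push_cast at hcast
    exact hcast.symm
  -- step 3: swap
  set Q : ℕ → ℝ := fun d => ∑ s ∈ Finset.range (i+1), p s * (if d ^ k ∣ n s then (1:ℝ) else 0)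
    with hQ
  have hswap : (∑ s ∈ Finset.range (i+1), p s * (if IsKFree k (n s) then (1:ℝ) else 0))
      = ∑ d ∈ Finset.Icc 1 D, (ArithmeticFunction.moebius d : ℝ) * Q d := by
    calc ∑ s ∈ Finset.range (i+1), p s * (if IsKFree k (n s) then (1:ℝ) else 0)
        = ∑ s ∈ Finset.range (i+1), ∑ d ∈ Finset.Icc 1 D,
            p s * (if d ^ k ∣ n s then (ArithmeticFunction.moebius d : ℝ) else 0) := by
          apply Finset.sum_congr rfl
          intro s hs
          rw [hFexp s (by simp at hs; omega), Finset.mul_sum]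
      _ = ∑ d ∈ Finset.Icc 1 D, ∑ s ∈ Finset.range (i+1),
            p s * (if d ^ k ∣ n s then (ArithmeticFunction.moebius d : ℝ) else 0) :=
          Finset.sum_comm
      _ = ∑ d ∈ Finset.Icc 1 D, (ArithmeticFunction.moebius d : ℝ) * Q d := by
          apply Finset.sum_congr rfl
          intro d _
          rw [hQ]
          dsimp only
          rw [Finset.mul_sum]
          apply Finset.sum_congr rfl
          intro s _
          split <;> ring
  -- f as sum over Icc with if
  set c : ℕ → ℝ := fun d => if Nat.gcd (a - b) (d ^ k) ∣ b * i + r then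
      (ArithmeticFunction.moebius d : ℝ) * Nat.gcd (a - b) (d ^ k) / (d : ℝ) ^ k else 0 with hc
  have hfsum : (∑ d ∈ (Finset.Icc 1 D).filter
        (fun d => Nat.gcd (a - b) (d ^ k) ∣ b * i + r),
        (ArithmeticFunction.moebius d : ℝ) * Nat.gcd (a - b) (d ^ k) / (d : ℝ) ^ k)
      = ∑ d ∈ Finset.Icc 1 D, c d := by
    rw [Finset.sum_filter]
  -- per-d bound
  have hperd : ∀ d ∈ Finset.Icc 1 D,
      |(ArithmeticFunction.moebius d : ℝ) * Q d - c d| ≤ 4 / Real.sqrt (β * i) := by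
    intro d hd
    simp only [Finset.mem_Icc] at hd
    have hd1 : 1 ≤ d := hd.1
    have hdk1 : 1 ≤ d ^ k := Nat.one_le_pow _ _ (by omega)
    set g : ℕ := Nat.gcd (a - b) (d ^ k) with hg
    have hg0 : 0 < g := Nat.gcd_pos_of_pos_right _ (by omega)
    have hgdvd : g ∣ d ^ k := Nat.gcd_dvd_right _ _
    have hgab : g ∣ a - b := Nat.gcd_dvd_left _ _
    set m : ℕ := d ^ k / g with hm
    set u : ℕ := (a - b) / g with hu
    have hm1 : 1 ≤ m := Nat.div_pos (Nat.le_of_dvd (by omega) hgdvd) hg0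
    have hmg : g * m = d ^ k := Nat.mul_div_cancel' hgdvd
    have hug : g * u = a - b := Nat.mul_div_cancel' hgab
    by_cases hcase : g ∣ b * i + r
    · -- main case
      set cc : ℕ := (b * i + r) / g with hcc
      have hccg : g * cc = b * i + r := Nat.mul_div_cancel' hcase
      have hcop : Nat.gcd u m = 1 := by
        rw [hu, hm, hg]
        exact Nat.coprime_div_gcd_div_gcd hg0
      have hiff : ∀ s, (d ^ k ∣ n s) ↔ (m ∣ u * s + cc) := by
        intro s
        rw [hn]
        dsimp only
        constructor
        · intro h
          have h2 : g * m ∣ g * (u * s + cc) := by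
            rw [hmg]
            have : b*i + r + (a-b)*s = g * (u * s + cc) := by
              rw [Nat.mul_add, hccg, ← Nat.mul_assoc, hug]
              ring
            rwa [← this]
          exact (Nat.mul_dvd_mul_iff_left hg0).mp h2
        · intro h
          have h2 : g * m ∣ g * (u * s + cc) := (Nat.mul_dvd_mul_iff_left hg0).mpr h
          rw [hmg] at h2
          have : b*i + r + (a-b)*s = g * (u * s + cc) := by
            rw [Nat.mul_add, hccg, ← Nat.mul_assoc, hug]
            ring
          rwa [this]
      have hQd : Q d = ∑ s ∈ Finset.range (i+1), p s * (if m ∣ u*s+cc then (1:ℝ) else 0) := by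
        rw [hQ]
        apply Finset.sum_congr rfl
        intro s _
        congr 1
        rw [if_congr (hiff s) rfl rfl]
      have hgR : (0:ℝ) < (g:ℝ) := by exact_mod_cast hg0
      have hmRd : (0:ℝ) < (m:ℝ) := by exact_mod_cast hm1
      have hcd : c d = (ArithmeticFunction.moebius d : ℝ) * (1 / m) := by
        rw [hc]
        dsimp only
        rw [if_pos hcase]
        have hdk : ((d:ℝ))^k = (g:ℝ) * m := by
          rw [← Nat.cast_pow, ← hmg]
          push_cast
          ring
        rw [mul_div_assoc, hdk]
        congr 1
        rw [div_eq_div_iff (by positivity) hmRd.ne']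
        ring
      have hkey := key_est hα0 hα1 hi hm1 hcop (c := cc) (u := u)
      rw [hQd, hcd, ← mul_sub]
      rw [abs_mul]
      calc |(ArithmeticFunction.moebius d : ℝ)| *
            |(∑ s ∈ Finset.range (i+1), p s * (if m ∣ u*s+cc then (1:ℝ) else 0)) - 1/m|
          ≤ 1 * (4 / Real.sqrt (β * i)) := by
            apply mul_le_mul _ _ (abs_nonneg _) zero_le_one
            · have := ArithmeticFunction.abs_moebius_le_one (n := d)
              exact_mod_cast this
            · rw [hp] at *
              exact hkey
        _ = 4 / Real.sqrt (β * i) := by ring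
    · -- degenerate case : Q d = 0 and c d = 0
      have hQd : Q d = 0 := by
        rw [hQ]
        apply Finset.sum_eq_zero
        intro s _
        have : ¬ (d ^ k ∣ n s) := by
          intro hdvd
          apply hcase
          have h1 : g ∣ n s := dvd_trans hgdvd hdvd
          have h2 : g ∣ (a-b) * s := Dvd.dvd.mul_right hgab s
          rw [hn] at h1
          dsimp only at h1
          have := Nat.dvd_sub h1 h2
          simpa using this
        rw [if_neg this, mul_zero]
      have hcd : c d = 0 := by rw [hc]; dsimp only; rw [if_neg hcase]
      rw [hQd, hcd, mul_zero, sub_zero, abs_zero]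
      positivity
  -- assemble
  rw [hswap, hfsum, ← Finset.sum_sub_distrib]
  calc |∑ d ∈ Finset.Icc 1 D, ((ArithmeticFunction.moebius d : ℝ) * Q d - c d)|
      ≤ ∑ d ∈ Finset.Icc 1 D, |(ArithmeticFunction.moebius d : ℝ) * Q d - c d| :=
        Finset.abs_sum_le_sum_abs _ _
    _ ≤ ∑ _d ∈ Finset.Icc 1 D, (4 / Real.sqrt (β * i)) := Finset.sum_le_sum hperd
    _ = D * (4 / Real.sqrt (β * i)) := by
        rw [Finset.sum_const, Nat.card_Icc]
        simp [nsmul_eq_mul]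
    _ ≤ (4 * (a + r)) * (i : ℝ) ^ ((1 : ℝ) / k - 1 / 2) / Real.sqrt β := by
      have hsβi : Real.sqrt (β * i) = Real.sqrt β * Real.sqrt i := Real.sqrt_mul hβ0.le _
      have hDle : (D : ℝ) ≤ (a + r) * (i:ℝ) ^ ((1:ℝ)/k) := by
        have h1 : (D : ℝ) ≤ ((a * i + r : ℕ) : ℝ) ^ ((1 : ℝ) / k) := Nat.floor_le (by positivity)
        have hi1R : (1:ℝ) ≤ (i:ℝ) := by exact_mod_cast hi
        have hr0 : (0:ℝ) ≤ (r:ℝ) := Nat.cast_nonneg r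
        have h2 : ((a * i + r : ℕ) : ℝ) ≤ ((a:ℝ) + r) * i := by
          push_cast
          nlinarith [mul_nonneg hr0 (sub_nonneg.mpr hi1R)]
        have h3 : ((a * i + r : ℕ) : ℝ) ^ ((1 : ℝ) / k) ≤ (((a:ℝ) + r) * i) ^ ((1:ℝ)/k) :=
          Real.rpow_le_rpow (by positivity) h2 (by positivity)
        have h4 : (((a:ℝ) + r) * i) ^ ((1:ℝ)/k) = ((a:ℝ)+r) ^ ((1:ℝ)/k) * (i:ℝ) ^ ((1:ℝ)/k) :=
          Real.mul_rpow (by positivity) (by positivity)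
        have h5 : ((a:ℝ)+r) ^ ((1:ℝ)/k) ≤ ((a:ℝ)+r) := by
          have ha1 : (1:ℝ) ≤ (a:ℝ) + r := by
            have : (1:ℝ) ≤ (a:ℝ) := by exact_mod_cast (by omega : 1 ≤ a)
            have : (0:ℝ) ≤ (r:ℝ) := Nat.cast_nonneg r
            linarith
          calc ((a:ℝ)+r) ^ ((1:ℝ)/k) ≤ ((a:ℝ)+r) ^ (1:ℝ) :=
                Real.rpow_le_rpow_of_exponent_le ha1 (by
                  rw [div_le_one (by positivity : (0:ℝ) < (k:ℝ))]
                  exact_mod_cast (by omega : 1 ≤ k))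
            _ = (a:ℝ)+r := Real.rpow_one _
        calc (D : ℝ) ≤ ((a * i + r : ℕ) : ℝ) ^ ((1 : ℝ) / k) := h1
          _ ≤ (((a:ℝ) + r) * i) ^ ((1:ℝ)/k) := h3
          _ = ((a:ℝ)+r) ^ ((1:ℝ)/k) * (i:ℝ) ^ ((1:ℝ)/k) := h4
          _ ≤ ((a:ℝ)+r) * (i:ℝ) ^ ((1:ℝ)/k) := by
              apply mul_le_mul_of_nonneg_right h5 (by positivity)
      have hipow : (i:ℝ) ^ ((1:ℝ)/k) / Real.sqrt i = (i:ℝ) ^ ((1:ℝ)/k - 1/2) := by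
        rw [Real.sqrt_eq_rpow, ← Real.rpow_sub hiR]
      calc (D:ℝ) * (4 / Real.sqrt (β * i))
          ≤ ((a:ℝ)+r) * (i:ℝ) ^ ((1:ℝ)/k) * (4 / Real.sqrt (β * i)) := by
            apply mul_le_mul_of_nonneg_right hDle (by positivity)
        _ = (4 * ((a:ℝ) + r)) * ((i:ℝ) ^ ((1:ℝ)/k) / Real.sqrt i) / Real.sqrt β := by
            rw [hsβi]
            have hsb : (0:ℝ) < Real.sqrt β := Real.sqrt_pos.mpr hβ0
            have hsi : (0:ℝ) < Real.sqrt i := Real.sqrt_pos.mpr hiR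
            field_simp
        _ = (4 * ((a:ℝ) + r)) * (i : ℝ) ^ ((1 : ℝ) / k - 1 / 2) / Real.sqrt β := by
            rw [hipow]
        _ = (4 * (a + r)) * (i : ℝ) ^ ((1 : ℝ) / k - 1 / 2) / Real.sqrt β := by
            push_cast
            ring

open scoped Classical in
/-- For `k ≥ 2`, integers `a > b ≥ 1`, `r ≥ 0`, `α ∈ (0,1)`, and the `α`-random walk
`P_0 = r`, `P_i = P_{i-1} + W_i` with i.i.d. jumps `a` (prob. `α`) and `b` (prob. `1-α`),
letting `X_i` be the indicator that `P_i` is `k`-free, there is `C = C(k,a,b,r) > 0`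
such that `|E(X_i) - f(i)| ≤ C i^(1/k-1/2)/√(α(1-α))` for all `i ≥ 1`, where
`f(i) = ∑_{1 ≤ d ≤ (ai+r)^(1/k), gcd(a-b,d^k) ∣ bi+r} μ(d) gcd(a-b,d^k)/d^k`. -/
theorem stmt_12 {Ω : Type*} [MeasurableSpace Ω] (μ' : Measure Ω) [IsProbabilityMeasure μ']
    (k a b r : ℕ) (hk : 2 ≤ k) (hb : 1 ≤ b) (hab : b < a)
    (α : ℝ) (hα : α ∈ Set.Ioo (0:ℝ) 1)
    (W : ℕ → Ω → ℕ) (hWmeas : ∀ i, Measurable (W i))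
    (hindep : iIndepFun W μ')
    (hWa : ∀ i, μ' {ω | W i ω = a} = ENNReal.ofReal α)
    (hWb : ∀ i, μ' {ω | W i ω = b} = ENNReal.ofReal (1 - α))
    (P : ℕ → Ω → ℕ) (hP : ∀ i ω, P i ω = r + ∑ j ∈ Finset.range i, W j ω)
    (X : ℕ → Ω → ℝ) (hX : ∀ i ω, X i ω = if IsKFree k (P i ω) then 1 else 0)
    (f : ℕ → ℝ)
    (hf : ∀ i : ℕ, f i =
      ∑ d ∈ (Finset.Icc 1 ⌊((a * i + r : ℕ) : ℝ) ^ ((1 : ℝ) / k)⌋₊).filter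
          (fun d => Nat.gcd (a - b) (d ^ k) ∣ b * i + r),
        (ArithmeticFunction.moebius d : ℝ) * Nat.gcd (a - b) (d ^ k) / (d : ℝ) ^ k) :
    ∃ C : ℝ, 0 < C ∧ ∀ i : ℕ, 1 ≤ i →
      |(∫ ω, X i ω ∂μ') - f i| ≤
        C * (i : ℝ) ^ ((1 : ℝ) / k - 1 / 2) / Real.sqrt (α * (1 - α)) := by
  refine ⟨4 * (a + r), ?_, ?_⟩
  · have ha : (0:ℝ) < (a:ℝ) := by exact_mod_cast (by omega : 0 < a)
    have hr : (0:ℝ) ≤ (r:ℝ) := Nat.cast_nonneg r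
    nlinarith
  · intro i hi
    rw [exp_formula μ' k a b r hb hab α hα W hWmeas hindep hWa hWb P hP X hX i, hf i]
    exact det_est k a b r i hk hb hab hi hα.1 hα.2
end
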